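/- arXiv:1902.03707 — 6 statements merged into one kernel-verified Lean document; each statement's English description precedes it below -/
import Mathlib

section
/- If P ≥ P* := 1/‖Φ‖_∞, where Φ is the unique solution of -ΔΦ = 1 in Ω with Φ = 0 on ∂Ω, then for every λ > 0 the problem Δu = λ f(x)/u² + P in Ω, 0 < u ≤ 1 in Ω, u = 1 on ∂Ω, has no positive classical solution. -/
open Set Filter

noncomputable def lap {N : ℕ} (u : EuclideanSpace ℝ (Fin N) → ℝ)
    (x : EuclideanSpace ℝ (Fin N)) : ℝ :=
  ∑ i, fderiv ℝ (fun y => fderiv ℝ u y (EuclideanSpace.single i 1)) x (EuclideanSpace.single i 1)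

lemma secondDir_nonpos_of_isLocalMax {E : Type*} [NormedAddCommGroup E] [NormedSpace ℝ E]
    {g : E → ℝ} {z : E} (v : E)
    (hd : ∀ᶠ y in nhds z, DifferentiableAt ℝ g y)
    (hg2 : DifferentiableAt ℝ (fun y => fderiv ℝ g y v) z)
    (hmax : IsLocalMax g z) :
    fderiv ℝ (fun y => fderiv ℝ g y v) z v ≤ 0 := by
  by_contra hpos
  push_neg at hpos
  set F : E → ℝ := fun y => fderiv ℝ g y v with hF
  set L : ℝ → E := fun t => z + t • v with hLdef
  have hL : ∀ t : ℝ, HasDerivAt L v t := by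
    intro t
    have h1 : HasDerivAt (fun t : ℝ => t • v) ((1:ℝ) • v) t := (hasDerivAt_id t).smul_const v
    simpa [hLdef, one_smul] using h1.const_add z
  have hLc : Continuous L := by fun_prop
  have hL0 : L 0 = z := by simp [hLdef]
  have hLtend : Filter.Tendsto L (nhds 0) (nhds z) := by
    have := hLc.continuousAt (x := (0:ℝ)); rwa [ContinuousAt, hL0] at this
  set φ : ℝ → ℝ := fun t => g (L t) with hφdef
  have hφmax : IsLocalMax φ 0 := by
    have := hLtend.eventually hmax
    simpa [hφdef, hL0, IsLocalMax, IsMaxFilter] using this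
  have hφd : ∀ᶠ t in nhds 0, HasDerivAt φ (F (L t)) t := by
    have := hLtend.eventually hd
    filter_upwards [this] with t ht
    exact (ht.hasFDerivAt.comp_hasDerivAt t (hL t))
  have hψd : HasDerivAt (fun t => F (L t)) (fderiv ℝ F z v) 0 := by
    have h : HasFDerivAt F (fderiv ℝ F z) (L 0) := by rw [hL0]; exact hg2.hasFDerivAt
    exact h.comp_hasDerivAt (f := L) 0 (hL 0)
  have hψ0 : F (L 0) = 0 := by
    rw [hL0]
    have h0 : HasDerivAt φ (F z) 0 := by
      have := hφd.self_of_nhds; rwa [hL0] at this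
    exact hφmax.hasDerivAt_eq_zero h0
  have hslope := hasDerivAt_iff_tendsto_slope.1 hψd
  have hev : ∀ᶠ t in nhdsWithin 0 (Ioi (0:ℝ)), 0 < F (L t) := by
    have hpos' : ∀ᶠ s in nhds (fderiv ℝ F z v), 0 < s := eventually_gt_nhds hpos
    have h1 : ∀ᶠ t in nhdsWithin 0 {(0:ℝ)}ᶜ, 0 < slope (fun t => F (L t)) 0 t :=
      hslope.eventually hpos'
    have h2 : nhdsWithin (0:ℝ) (Ioi 0) ≤ nhdsWithin 0 {(0:ℝ)}ᶜ :=
      nhdsWithin_mono 0 (fun t ht => ne_of_gt ht)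
    filter_upwards [h2 h1, self_mem_nhdsWithin] with t ht ht0
    have hs : slope (fun t => F (L t)) 0 t = F (L t) / t := by
      simp [slope_def_field, hψ0]
    rw [hs] at ht
    have htpos : (0:ℝ) < t := mem_Ioi.1 ht0
    have := mul_pos ht htpos
    rwa [div_mul_cancel₀ _ (ne_of_gt htpos)] at this
  obtain ⟨b, hb, hIoc⟩ := mem_nhdsGT_iff_exists_Ioc_subset.1 hev
  obtain ⟨ε, hε, hball⟩ := Metric.eventually_nhds_iff.1 (hφd.and hφmax)
  set t0 : ℝ := min b (ε/2) with ht0def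
  have ht0pos : 0 < t0 := lt_min hb (by linarith)
  have hmem : ∀ t ∈ Icc (0:ℝ) t0, (HasDerivAt φ (F (L t)) t ∧ φ t ≤ φ 0) := by
    intro t ht
    apply hball
    have h1 : |t| < ε := by
      rw [abs_of_nonneg ht.1]
      calc t ≤ t0 := ht.2
        _ ≤ ε/2 := min_le_right _ _
        _ < ε := by linarith
    simpa [Real.dist_eq] using h1
  have hcont : ContinuousOn φ (Icc 0 t0) := fun t ht =>
    ((hmem t ht).1.continuousAt).continuousWithinAt
  obtain ⟨c, hc, hceq⟩ := exists_hasDerivAt_eq_slope φ (fun t => F (L t)) ht0pos hcont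
    (fun t ht => (hmem t ⟨le_of_lt ht.1, le_of_lt ht.2⟩).1)
  have hcpos : 0 < F (L c) := hIoc ⟨hc.1, le_trans (le_of_lt hc.2) (min_le_left _ _)⟩
  rw [hceq] at hcpos
  have hle : φ t0 ≤ φ 0 := (hmem t0 ⟨le_of_lt ht0pos, le_refl _⟩).2
  have : (φ t0 - φ 0) / (t0 - 0) ≤ 0 := by
    apply div_nonpos_of_nonpos_of_nonneg <;> linarith
  linarith

lemma diffF {N : ℕ} {u : EuclideanSpace ℝ (Fin N) → ℝ} {Ω : Set (EuclideanSpace ℝ (Fin N))}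
    (hΩo : IsOpen Ω) {z : EuclideanSpace ℝ (Fin N)} (hz : z ∈ Ω)
    (hu : ContDiffOn ℝ 2 u Ω) (v : EuclideanSpace ℝ (Fin N)) :
    DifferentiableAt ℝ (fun y => fderiv ℝ u y v) z := by
  have h1 : ContDiffAt ℝ 2 u z := hu.contDiffAt (hΩo.mem_nhds hz)
  have h2 : ContDiffAt ℝ 1 (fderiv ℝ u) z := h1.fderiv_right (by norm_num)
  have h3 : DifferentiableAt ℝ (fderiv ℝ u) z := h2.differentiableAt (by norm_num)
  exact (ContinuousLinearMap.apply ℝ ℝ v).differentiableAt.comp z h3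

lemma fderiv_term {N : ℕ} {u Φ : EuclideanSpace ℝ (Fin N) → ℝ}
    {Ω : Set (EuclideanSpace ℝ (Fin N))} (hΩo : IsOpen Ω)
    (hu : ContDiffOn ℝ 2 u Ω) (hΦ : ContDiffOn ℝ 2 Φ Ω) (P δ : ℝ) (j : Fin N)
    {z : EuclideanSpace ℝ (Fin N)} (hz : z ∈ Ω) (v : EuclideanSpace ℝ (Fin N)) :
    fderiv ℝ (fun y => fderiv ℝ (fun y' => u y' + P * Φ y' + δ * (y' j)^2) y v) z v
      = fderiv ℝ (fun y => fderiv ℝ u y v) z v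
        + P * fderiv ℝ (fun y => fderiv ℝ Φ y v) z v + 2 * δ * (v j) * (v j) := by
  set pj : EuclideanSpace ℝ (Fin N) →L[ℝ] ℝ := EuclideanSpace.proj j with hpj
  have claim1 : ∀ y ∈ Ω, fderiv ℝ (fun y' => u y' + P * Φ y' + δ * (y' j)^2) y v
      = fderiv ℝ u y v + P * fderiv ℝ Φ y v + (2 * δ * v j) * (y j) := by
    intro y hy
    have hud : DifferentiableAt ℝ u y :=
      (hu.contDiffAt (hΩo.mem_nhds hy)).differentiableAt (by norm_num)
    have hΦd : DifferentiableAt ℝ Φ y :=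
      (hΦ.contDiffAt (hΩo.mem_nhds hy)).differentiableAt (by norm_num)
    have hpjd : HasFDerivAt (fun y' : EuclideanSpace ℝ (Fin N) => y' j) pj y :=
      pj.hasFDerivAt
    have hq : HasFDerivAt (fun y' : EuclideanSpace ℝ (Fin N) => (y' j)^2)
        ((y j) • pj + (y j) • pj) y := by
      have := hpjd.mul hpjd
      simp only [sq]; exact this
    have hW : HasFDerivAt (fun y' => u y' + P * Φ y' + δ * (y' j)^2)
        (fderiv ℝ u y + P • fderiv ℝ Φ y + δ • ((y j) • pj + (y j) • pj)) y :=
      (hud.hasFDerivAt.add (hΦd.hasFDerivAt.const_mul P)).add (hq.const_mul δ)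
    rw [hW.fderiv]
    simp [hpj]
    ring
  have claim2 : (fun y => fderiv ℝ (fun y' => u y' + P * Φ y' + δ * (y' j)^2) y v)
      =ᶠ[nhds z] (fun y => fderiv ℝ u y v + P * fderiv ℝ Φ y v + (2 * δ * v j) * (y j)) := by
    filter_upwards [hΩo.mem_nhds hz] with y hy using claim1 y hy
  have hG : HasFDerivAt (fun y => fderiv ℝ u y v + P * fderiv ℝ Φ y v + (2 * δ * v j) * (y j))
      (fderiv ℝ (fun y => fderiv ℝ u y v) z + P • fderiv ℝ (fun y => fderiv ℝ Φ y v) z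
        + (2 * δ * v j) • pj) z := by
    exact ((diffF hΩo hz hu v).hasFDerivAt.add
      ((diffF hΩo hz hΦ v).hasFDerivAt.const_mul P)).add (pj.hasFDerivAt.const_mul (2 * δ * v j))
  rw [claim2.fderiv_eq, hG.fderiv]
  simp [hpj]

lemma lap_W {N : ℕ} {u Φ : EuclideanSpace ℝ (Fin N) → ℝ}
    {Ω : Set (EuclideanSpace ℝ (Fin N))} (hΩo : IsOpen Ω)
    (hu : ContDiffOn ℝ 2 u Ω) (hΦ : ContDiffOn ℝ 2 Φ Ω) (P δ : ℝ) (j : Fin N)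
    {z : EuclideanSpace ℝ (Fin N)} (hz : z ∈ Ω) :
    lap (fun y => u y + P * Φ y + δ * (y j)^2) z = lap u z + P * lap Φ z + 2 * δ := by
  unfold lap
  have h := fun i => fderiv_term hΩo hu hΦ P δ j hz (EuclideanSpace.single i 1)
  simp only [h]
  rw [Finset.sum_add_distrib, Finset.sum_add_distrib, ← Finset.mul_sum]
  congr 1
  simp [EuclideanSpace.single_apply, apply_ite, mul_ite]

/-- If `P ≥ P* = 1/‖Φ‖_∞`, then for every `λ > 0` the problem
`Δu = λ f/u² + P`, `0 < u ≤ 1` in `Ω`, `u = 1` on `∂Ω` has no positive classical solution. -/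
theorem stmt0 {N : ℕ} (Ω : Set (EuclideanSpace ℝ (Fin N)))
    (hΩo : IsOpen Ω) (hΩb : Bornology.IsBounded Ω) (hΩne : Ω.Nonempty)
    (f : EuclideanSpace ℝ (Fin N) → ℝ) (hfc : ContinuousOn f (closure Ω))
    (hf0 : ∀ x ∈ closure Ω, 0 ≤ f x) (hfne : ∃ x ∈ Ω, f x ≠ 0)
    (Φ : EuclideanSpace ℝ (Fin N) → ℝ)
    (hΦc : ContinuousOn Φ (closure Ω)) (hΦ2 : ContDiffOn ℝ 2 Φ Ω)
    (hΦeq : ∀ x ∈ Ω, lap Φ x = -1)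
    (hΦbd : ∀ x ∈ frontier Ω, Φ x = 0)
    (hΦpos : ∀ x ∈ Ω, 0 < Φ x)
    (Pstar P : ℝ) (hPstar : Pstar = 1 / (⨆ x ∈ Ω, Φ x)) (hP : Pstar ≤ P)
    (lam : ℝ) (hlam : 0 < lam) :
    ¬ ∃ u : EuclideanSpace ℝ (Fin N) → ℝ,
      ContinuousOn u (closure Ω) ∧ ContDiffOn ℝ 2 u Ω ∧
      (∀ x ∈ Ω, lap u x = lam * f x / (u x) ^ 2 + P) ∧
      (∀ x ∈ Ω, 0 < u x ∧ u x ≤ 1) ∧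
      (∀ x ∈ frontier Ω, u x = 1) := by
  rintro ⟨u, huc, hu2, hueq, hub, hubd⟩
  obtain ⟨xw, hxw⟩ := hΩne
  rcases Nat.eq_zero_or_pos N with hN | hN
  · have h := hΦeq xw hxw
    subst hN
    unfold lap at h
    simp at h
  have j : Fin N := ⟨0, hN⟩
  have hKc : IsCompact (closure Ω) :=
    Metric.isCompact_of_isClosed_isBounded isClosed_closure hΩb.closure
  have hKne : (closure Ω).Nonempty := ⟨xw, subset_closure hxw⟩
  obtain ⟨R, hR⟩ := isBounded_iff_forall_norm_le.1 hΩb.closure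
  have hsq : ∀ y ∈ closure Ω, (y j)^2 ≤ R^2 := by
    intro y hy
    have hn : ‖y‖^2 = ∑ i, ‖y i‖^2 := by
      rw [EuclideanSpace.norm_eq, Real.sq_sqrt]; positivity
    have h1 : (y j)^2 ≤ ‖y‖^2 := by
      rw [hn]
      calc (y j)^2 = ‖y j‖^2 := by simp [Real.norm_eq_abs, sq_abs]
        _ ≤ ∑ i, ‖y i‖^2 := Finset.single_le_sum (f := fun i => ‖y i‖^2) (fun i _ => by positivity) (Finset.mem_univ j)
    have h2 : ‖y‖ ≤ R := hR y hy
    nlinarith [norm_nonneg y]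
  -- maximum principle claim
  have key : ∀ x ∈ closure Ω, u x + P * Φ x ≤ 1 := by
    intro x hx
    apply le_of_forall_pos_le_add
    intro ε hε
    have hRpos : (0:ℝ) < R^2 + 1 := by positivity
    set δ : ℝ := ε / (R^2 + 1) with hδdef
    have hδpos : 0 < δ := div_pos hε hRpos
    set W : EuclideanSpace ℝ (Fin N) → ℝ := fun y => u y + P * Φ y + δ * (y j)^2 with hWdef
    have hqc : Continuous (fun y : EuclideanSpace ℝ (Fin N) => δ * (y j)^2) := by fun_prop
    have hWc : ContinuousOn W (closure Ω) :=
      (huc.add (continuousOn_const.mul hΦc)).add hqc.continuousOn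
    obtain ⟨z, hzK, hzmax⟩ := hKc.exists_isMaxOn hKne hWc
    have hzmax' : ∀ y ∈ closure Ω, W y ≤ W z := fun y hy => hzmax hy
    by_cases hzΩ : z ∈ Ω
    · exfalso
      have hmax : IsLocalMax W z := by
        filter_upwards [hΩo.mem_nhds hzΩ] with y hy using hzmax' y (subset_closure hy)
      have hq2 : ContDiff ℝ 2 (fun y : EuclideanSpace ℝ (Fin N) => δ * (y j)^2) :=
        contDiff_const.mul ((EuclideanSpace.proj (𝕜 := ℝ) j).contDiff.pow 2)
      have hW2 : ContDiffOn ℝ 2 W Ω :=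
        (hu2.add (contDiffOn_const.mul hΦ2)).add hq2.contDiffOn
      have hterm : ∀ i : Fin N,
          fderiv ℝ (fun y => fderiv ℝ W y (EuclideanSpace.single i 1)) z
            (EuclideanSpace.single i 1) ≤ 0 := by
        intro i
        refine secondDir_nonpos_of_isLocalMax _ ?_ ?_ hmax
        · filter_upwards [hΩo.mem_nhds hzΩ] with y hy using
            (hW2.contDiffAt (hΩo.mem_nhds hy)).differentiableAt (by norm_num)
        · exact diffF hΩo hzΩ hW2 _
      have hsum : lap W z ≤ 0 := Finset.sum_nonpos (fun i _ => hterm i)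
      have hlap : lap W z = lam * f z / (u z)^2 + 2 * δ := by
        rw [hWdef, lap_W hΩo hu2 hΦ2 P δ j hzΩ, hueq z hzΩ, hΦeq z hzΩ]
        ring
      have hfz : 0 ≤ f z := hf0 z (subset_closure hzΩ)
      have h0 : 0 ≤ lam * f z / (u z)^2 := div_nonneg (mul_nonneg hlam.le hfz) (sq_nonneg _)
      linarith [hlap ▸ hsum]
    · have hzfr : z ∈ frontier Ω := by rw [hΩo.frontier_eq]; exact ⟨hzK, hzΩ⟩
      have hWz : W z = 1 + δ * (z j)^2 := by
        simp [hWdef, hubd z hzfr, hΦbd z hzfr]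
      have h1 : u x + P * Φ x ≤ W x := by
        have : 0 ≤ δ * (x j)^2 := by positivity
        simp only [hWdef]; linarith
      have h2 : W x ≤ W z := hzmax' x hx
      have h3 : δ * (z j)^2 ≤ δ * R^2 := by
        exact mul_le_mul_of_nonneg_left (hsq z hzK) hδpos.le
      have h4 : δ * R^2 ≤ ε := by
        rw [hδdef, div_mul_eq_mul_div, div_le_iff₀ hRpos]
        nlinarith
      linarith
  -- the supremum is attained at an interior point
  obtain ⟨x0, hx0K, hx0max⟩ := hKc.exists_isMaxOn hKne hΦc
  have hx0max' : ∀ y ∈ closure Ω, Φ y ≤ Φ x0 := fun y hy => hx0max hy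
  have hx0Ω : x0 ∈ Ω := by
    by_contra h
    have hfr : x0 ∈ frontier Ω := by rw [hΩo.frontier_eq]; exact ⟨hx0K, h⟩
    have h0 := hΦbd x0 hfr
    have h2 := hx0max' xw (subset_closure hxw)
    have h3 := hΦpos xw hxw
    linarith
  have hMub : ∀ x ∈ Ω, Φ x ≤ Φ x0 := fun x hxx => hx0max' x (subset_closure hxx)
  have hx0pos : 0 < Φ x0 := hΦpos x0 hx0Ω
  set M : ℝ := ⨆ x ∈ Ω, Φ x with hMdef
  have hMle : M ≤ Φ x0 :=
    Real.iSup_le (fun x => Real.iSup_le (fun hxx => hMub x hxx) hx0pos.le) hx0pos.le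
  have hMge : Φ x0 ≤ M := by
    have hbdd : BddAbove (Set.range fun x => ⨆ _ : x ∈ Ω, Φ x) := by
      refine ⟨Φ x0, ?_⟩
      rintro m ⟨x, rfl⟩
      exact Real.iSup_le (fun hxx => hMub x hxx) hx0pos.le
    calc Φ x0 = ⨆ _ : x0 ∈ Ω, Φ x0 := (ciSup_pos (f := fun _ : x0 ∈ Ω => Φ x0) hx0Ω).symm
      _ ≤ M := le_ciSup hbdd x0
  have hMeq : M = Φ x0 := le_antisymm hMle hMge
  have hM : 0 < M := hMeq ▸ hx0pos
  have hPp : 1 / M ≤ P := by rw [hPstar] at hP; exact hP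
  have h1 : 1 ≤ P * Φ x0 := by
    rw [← hMeq]
    calc (1:ℝ) = (1/M) * M := by field_simp
      _ ≤ P * M := mul_le_mul_of_nonneg_right hPp hM.le
  have h2 := key x0 hx0K
  have h3 := (hub x0 hx0Ω).1
  linarith
end

section
/- For fixed 0 ≤ P < P*, if the problem -Δũ = λf/(1-ũ)² + P in Ω, 0 ≤ ũ < 1 in Ω, ũ = 0 on ∂Ω, admits a classical solution ũ, then λ ≤ (|Ω| - P∫_Ω Φ dx)/(∫_Ω Φ f dx). In particular the supremum λ*_P of voltages λ for which a solution exists is finite. -/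
open Set MeasureTheory Filter

/-- A classical solution of `-Δũ = λ f/(1-ũ)² + P` in `Ω`, `0 ≤ ũ < 1`, `ũ = 0` on `∂Ω`. -/
def IsSolutionT {N : ℕ} (Ω : Set (EuclideanSpace ℝ (Fin N)))
    (f : EuclideanSpace ℝ (Fin N) → ℝ) (P lam : ℝ)
    (u : EuclideanSpace ℝ (Fin N) → ℝ) : Prop :=
  ContinuousOn u (closure Ω) ∧ ContDiffOn ℝ 2 u Ω ∧
  (∀ x ∈ Ω, -(lap u x) = lam * f x / (1 - u x) ^ 2 + P) ∧
  (∀ x ∈ Ω, 0 ≤ u x ∧ u x < 1) ∧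
  (∀ x ∈ frontier Ω, u x = 0)

noncomputable section AuxProof

open Real Topology

noncomputable section Cutoff

/-- smooth bump `ψ ≥ 0`, positive on `(1,2)`, zero outside `[1,2]`. -/
def bumpψ (t : ℝ) : ℝ := smoothTransition (t - 1) * smoothTransition (2 - t)

lemma bumpψ_contDiff : Continuous bumpψ := by
  apply Continuous.mul
  · exact Real.smoothTransition.continuous.comp (continuous_id.sub continuous_const)
  · exact Real.smoothTransition.continuous.comp (continuous_const.sub continuous_id)

lemma bumpψ_nonneg (t : ℝ) : 0 ≤ bumpψ t :=
  mul_nonneg (smoothTransition.nonneg _) (smoothTransition.nonneg _)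

lemma bumpψ_zero_of_le {t : ℝ} (h : t ≤ 1) : bumpψ t = 0 := by
  simp [bumpψ, smoothTransition.zero_of_nonpos (by linarith : t - 1 ≤ 0)]

lemma bumpψ_zero_of_ge {t : ℝ} (h : 2 ≤ t) : bumpψ t = 0 := by
  simp [bumpψ, smoothTransition.zero_of_nonpos (by linarith : 2 - t ≤ 0)]

lemma bumpψ_pos {t : ℝ} (h1 : 1 < t) (h2 : t < 2) : 0 < bumpψ t :=
  mul_pos (smoothTransition.pos_of_pos (by linarith)) (smoothTransition.pos_of_pos (by linarith))

def bumpA : ℝ := ∫ s in (1:ℝ)..2, bumpψ s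

lemma bumpA_pos : 0 < bumpA :=
  intervalIntegral.intervalIntegral_pos_of_pos_on
    (bumpψ_contDiff.intervalIntegrable _ _)
    (fun x hx => bumpψ_pos hx.1 hx.2) one_lt_two

/-- `cutg'` : smooth increasing transition; 0 for `t ≤ 1`, 1 for `t ≥ 2`. -/
def cutg' (t : ℝ) : ℝ := (∫ s in (1:ℝ)..t, bumpψ s) / bumpA

lemma cutg'_hasDerivAt (t : ℝ) : HasDerivAt cutg' (bumpψ t / bumpA) t := by
  have h : HasDerivAt (fun u => ∫ s in (1:ℝ)..u, bumpψ s) (bumpψ t) t :=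
    intervalIntegral.integral_hasDerivAt_right
      (bumpψ_contDiff.intervalIntegrable _ _)
      (bumpψ_contDiff.stronglyMeasurableAtFilter _ _)
      bumpψ_contDiff.continuousAt
  exact h.div_const _

lemma cutg'_zero_of_le {t : ℝ} (h : t ≤ 1) : cutg' t = 0 := by
  have : (∫ s in (1:ℝ)..t, bumpψ s) = 0 := by
    rw [intervalIntegral.integral_symm]
    have : ∀ s ∈ Set.uIcc t 1, bumpψ s = 0 := by
      intro s hs
      rw [Set.uIcc_of_le h] at hs
      exact bumpψ_zero_of_le hs.2
    rw [intervalIntegral.integral_congr this]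
    simp
  simp [cutg', this]

lemma cutg'_nonneg (t : ℝ) : 0 ≤ cutg' t := by
  rcases le_or_gt t 1 with h | h
  · rw [cutg'_zero_of_le h]
  · apply div_nonneg _ bumpA_pos.le
    exact intervalIntegral.integral_nonneg h.le (fun s _ => bumpψ_nonneg s)

lemma cutg'_one_of_ge {t : ℝ} (h : 2 ≤ t) : cutg' t = 1 := by
  have h2 : (∫ s in (2:ℝ)..t, bumpψ s) = 0 := by
    have : ∀ s ∈ Set.uIcc 2 t, bumpψ s = 0 := by
      intro s hs
      rw [Set.uIcc_of_le h] at hs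
      exact bumpψ_zero_of_ge hs.1
    rw [intervalIntegral.integral_congr this]; simp
  have hadd : (∫ s in (1:ℝ)..t, bumpψ s) = bumpA := by
    rw [← intervalIntegral.integral_add_adjacent_intervals
      (bumpψ_contDiff.intervalIntegrable 1 2)
      (bumpψ_contDiff.intervalIntegrable 2 t), h2, add_zero]
    rfl
  rw [cutg', hadd, div_self bumpA_pos.ne']

lemma cutg'_le_one (t : ℝ) : cutg' t ≤ 1 := by
  rcases le_or_gt t 1 with h | h
  · rw [cutg'_zero_of_le h]; norm_num
  rcases le_or_gt 2 t with h2 | h2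
  · rw [cutg'_one_of_ge h2]
  · rw [cutg', div_le_one bumpA_pos]
    have : bumpA = (∫ s in (1:ℝ)..t, bumpψ s) + ∫ s in t..2, bumpψ s := by
      rw [intervalIntegral.integral_add_adjacent_intervals
        (bumpψ_contDiff.intervalIntegrable 1 t)
        (bumpψ_contDiff.intervalIntegrable t 2)]
      rfl
    rw [this]
    have : 0 ≤ ∫ s in t..2, bumpψ s :=
      intervalIntegral.integral_nonneg h2.le (fun s _ => bumpψ_nonneg s)
    linarith

lemma cutg'_contDiff : ContDiff ℝ 1 cutg' := by
  rw [contDiff_one_iff_deriv]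
  constructor
  · exact fun t => (cutg'_hasDerivAt t).differentiableAt
  · have : deriv cutg' = fun t => bumpψ t / bumpA := funext fun t => (cutg'_hasDerivAt t).deriv
    rw [this]
    exact bumpψ_contDiff.div_const _

lemma deriv_cutg'_nonneg (t : ℝ) : 0 ≤ deriv cutg' t := by
  rw [(cutg'_hasDerivAt t).deriv]
  exact div_nonneg (bumpψ_nonneg t) bumpA_pos.le

/-- the convex cutoff primitive `g`. -/
def cutg (t : ℝ) : ℝ := ∫ s in (1:ℝ)..t, cutg' s

lemma cutg_hasDerivAt (t : ℝ) : HasDerivAt cutg (cutg' t) t :=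
  intervalIntegral.integral_hasDerivAt_right
    (cutg'_contDiff.continuous.intervalIntegrable _ _)
    (cutg'_contDiff.continuous.stronglyMeasurableAtFilter _ _)
    cutg'_contDiff.continuous.continuousAt

lemma cutg_contDiff : ContDiff ℝ 2 cutg := by
  have h2 : (2 : WithTop ℕ∞) = 1 + 1 := by norm_num
  rw [h2, contDiff_succ_iff_deriv]
  refine ⟨fun t => (cutg_hasDerivAt t).differentiableAt, by simp, ?_⟩
  have : deriv cutg = cutg' := funext fun t => (cutg_hasDerivAt t).deriv
  rw [this]
  exact cutg'_contDiff

lemma cutg_zero_of_le {t : ℝ} (h : t ≤ 1) : cutg t = 0 := by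
  have : ∀ s ∈ Set.uIcc 1 t, cutg' s = 0 := by
    intro s hs
    rw [Set.uIcc_comm, Set.uIcc_of_le h] at hs
    exact cutg'_zero_of_le hs.2
  rw [cutg, intervalIntegral.integral_congr this]; simp

lemma cutg_nonneg (t : ℝ) : 0 ≤ cutg t := by
  rcases le_or_gt t 1 with h | h
  · rw [cutg_zero_of_le h]
  · exact intervalIntegral.integral_nonneg h.le (fun s _ => cutg'_nonneg s)

lemma cutg_le (t : ℝ) (h : 0 ≤ t) : cutg t ≤ t := by
  rcases le_or_gt t 1 with h1 | h1
  · rw [cutg_zero_of_le h1]; exact h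
  · have : cutg t ≤ ∫ _ in (1:ℝ)..t, (1:ℝ) := by
      apply intervalIntegral.integral_mono_on h1.le
        (cutg'_contDiff.continuous.intervalIntegrable _ _)
        (intervalIntegrable_const)
      exact fun s _ => cutg'_le_one s
    have h2 : (∫ _ in (1:ℝ)..t, (1:ℝ)) = t - 1 := by simp
    rw [h2] at this
    linarith

lemma cutg_ge (t : ℝ) : t - 2 ≤ cutg t := by
  rcases le_or_gt t 2 with h | h
  · have := cutg_nonneg t; linarith
  · have hsplit : cutg t = (∫ s in (1:ℝ)..2, cutg' s) + ∫ s in (2:ℝ)..t, cutg' s := by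
      rw [cutg, intervalIntegral.integral_add_adjacent_intervals
        (cutg'_contDiff.continuous.intervalIntegrable 1 2)
        (cutg'_contDiff.continuous.intervalIntegrable 2 t)]
    have h1 : 0 ≤ ∫ s in (1:ℝ)..2, cutg' s :=
      intervalIntegral.integral_nonneg one_le_two (fun s _ => cutg'_nonneg s)
    have h2 : (∫ s in (2:ℝ)..t, cutg' s) = t - 2 := by
      have : ∀ s ∈ Set.uIcc 2 t, cutg' s = 1 := by
        intro s hs
        rw [Set.uIcc_of_le h.le] at hs
        exact cutg'_one_of_ge hs.1
      rw [intervalIntegral.integral_congr this]; simp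
    rw [hsplit, h2]; linarith

end Cutoff

noncomputable section GreenHelpers

lemma lap_congr {N : ℕ} {f g : EuclideanSpace ℝ (Fin N) → ℝ} {x : EuclideanSpace ℝ (Fin N)}
    (h : f =ᶠ[nhds x] g) : lap f x = lap g x := by
  unfold lap
  refine Finset.sum_congr rfl fun i _ => ?_
  have h0 : fderiv ℝ f =ᶠ[nhds x] fderiv ℝ g := Filter.EventuallyEq.fderiv h
  have h1 : (fun y => fderiv ℝ f y (EuclideanSpace.single i 1))
      =ᶠ[nhds x] fun y => fderiv ℝ g y (EuclideanSpace.single i 1) :=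
    h0.mono fun y hy => by simp only []; rw [hy]
  rw [h1.fderiv_eq]

lemma lap_zero_fun {N : ℕ} (x : EuclideanSpace ℝ (Fin N)) :
    lap (fun _ => (0:ℝ)) x = 0 := by
  unfold lap
  have h1 : ∀ i : Fin N, (fun y : EuclideanSpace ℝ (Fin N) =>
      fderiv ℝ (fun _ => (0:ℝ)) y (EuclideanSpace.single i 1)) = fun _ => (0:ℝ) := by
    intro i; funext y
    rw [fderiv_const_apply]
    rfl
  refine Finset.sum_eq_zero fun i _ => ?_
  rw [h1 i, fderiv_const_apply]
  rfl

lemma lap_of_locally_zero {N : ℕ} {f : EuclideanSpace ℝ (Fin N) → ℝ}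
    {x : EuclideanSpace ℝ (Fin N)} (h : f =ᶠ[nhds x] fun _ => 0) : lap f x = 0 := by
  rw [lap_congr h, lap_zero_fun]

lemma continuous_lap {N : ℕ} {v : EuclideanSpace ℝ (Fin N) → ℝ} (hv : ContDiff ℝ 2 v) :
    Continuous (lap v) := by
  unfold lap
  apply continuous_finset_sum
  intro i _
  have h1 : ContDiff ℝ 1 (fun y => fderiv ℝ v y (EuclideanSpace.single i 1)) :=
    (hv.fderiv_right (by norm_num)).clm_apply contDiff_const
  exact (h1.continuous_fderiv one_ne_zero).clm_apply continuous_const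

lemma continuousOn_lap {N : ℕ} {Ω : Set (EuclideanSpace ℝ (Fin N))} (hΩ : IsOpen Ω)
    {u : EuclideanSpace ℝ (Fin N) → ℝ} (hu : ContDiffOn ℝ 2 u Ω) :
    ContinuousOn (lap u) Ω := by
  unfold lap
  apply continuousOn_finset_sum
  intro i _
  have h1 : ContDiffOn ℝ 1 (fun y => fderiv ℝ u y (EuclideanSpace.single i 1)) Ω :=
    (hu.fderiv_of_isOpen hΩ (by norm_num)).clm_apply contDiffOn_const
  exact (h1.continuousOn_fderiv_of_isOpen hΩ le_rfl).clm_apply continuousOn_const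



lemma lap_comp {N : ℕ} {Ω : Set (EuclideanSpace ℝ (Fin N))} (hΩ : IsOpen Ω)
    {Φ : EuclideanSpace ℝ (Fin N) → ℝ} (hΦ : ContDiffOn ℝ 2 Φ Ω)
    {G G' G'' : ℝ → ℝ} (hG : ∀ t, HasDerivAt G (G' t) t) (hG' : ∀ t, HasDerivAt G' (G'' t) t)
    {x : EuclideanSpace ℝ (Fin N)} (hx : x ∈ Ω) :
    lap (fun y => G (Φ y)) x = G' (Φ x) * lap Φ x
      + G'' (Φ x) * ∑ i, (fderiv ℝ Φ x (EuclideanSpace.single i 1))^2 := by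
  have hΦat : ∀ y ∈ Ω, DifferentiableAt ℝ Φ y := fun y hy =>
    (hΦ.contDiffAt (hΩ.mem_nhds hy)).differentiableAt (by norm_num)
  have hstep1 : ∀ y ∈ Ω, fderiv ℝ (fun z => G (Φ z)) y = G' (Φ y) • fderiv ℝ Φ y := by
    intro y hy
    exact ((hG (Φ y)).comp_hasFDerivAt y (hΦat y hy).hasFDerivAt).fderiv
  have key : ∀ i : Fin N,
      fderiv ℝ (fun y => fderiv ℝ (fun z => G (Φ z)) y (EuclideanSpace.single i 1)) x
          (EuclideanSpace.single i 1)
        = G' (Φ x) * fderiv ℝ (fun y => fderiv ℝ Φ y (EuclideanSpace.single i 1)) x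
            (EuclideanSpace.single i 1)
          + G'' (Φ x) * (fderiv ℝ Φ x (EuclideanSpace.single i 1))^2 := by
    intro i
    have hev : (fun y => fderiv ℝ (fun z => G (Φ z)) y (EuclideanSpace.single i 1))
        =ᶠ[nhds x] fun y => G' (Φ y) * fderiv ℝ Φ y (EuclideanSpace.single i 1) := by
      filter_upwards [hΩ.mem_nhds hx] with y hy
      rw [hstep1 y hy]
      simp [ContinuousLinearMap.smul_apply, smul_eq_mul]
    rw [hev.fderiv_eq]
    have hA : HasFDerivAt (fun y => G' (Φ y)) (G'' (Φ x) • fderiv ℝ Φ x) x :=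
      (hG' (Φ x)).comp_hasFDerivAt x (hΦat x hx).hasFDerivAt
    have hΦx2 : ContDiffAt ℝ 2 Φ x := hΦ.contDiffAt (hΩ.mem_nhds hx)
    have hB : DifferentiableAt ℝ (fun y => fderiv ℝ Φ y (EuclideanSpace.single i 1)) x :=
      ((hΦx2.fderiv_right (by norm_num)).clm_apply contDiffAt_const).differentiableAt one_ne_zero
    have hprod := hA.mul hB.hasFDerivAt
    rw [HasFDerivAt.fderiv (f := fun y => G' (Φ y) * fderiv ℝ Φ y (EuclideanSpace.single i 1)) hprod]
    simp only [ContinuousLinearMap.add_apply, ContinuousLinearMap.smul_apply, smul_eq_mul]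
    ring
  unfold lap
  rw [Finset.sum_congr rfl (fun i _ => key i), Finset.sum_add_distrib,
    ← Finset.mul_sum, ← Finset.mul_sum]


noncomputable def plap {n : ℕ} (f : (Fin n → ℝ) → ℝ) (x : Fin n → ℝ) : ℝ :=
  ∑ i, fderiv ℝ (fun y => fderiv ℝ f y (Pi.single i 1)) x (Pi.single i 1)

lemma fderiv_zero_on_isOpen {E F : Type*} [NormedAddCommGroup E] [NormedSpace ℝ E]
    [NormedAddCommGroup F] [NormedSpace ℝ F] {s : Set E} (hs : IsOpen s) {f : E → F}
    (hf : ∀ x ∈ s, f x = 0) : ∀ x ∈ s, fderiv ℝ f x = 0 := by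
  intro x hx
  have h : f =ᶠ[nhds x] fun _ => 0 := eventually_of_mem (hs.mem_nhds hx) hf
  rw [h.fderiv_eq]
  exact fderiv_const_apply 0

theorem green_pi {n : ℕ} {O K : Set (Fin (n+1) → ℝ)} (hO : IsOpen O) (hK : IsCompact K)
    (hKO : K ⊆ O) {U V : (Fin (n+1) → ℝ) → ℝ} (hU : ContDiffOn ℝ 2 U O)
    (hV : ContDiff ℝ 2 V) (hVK : ∀ x ∉ K, V x = 0) :
    ∫ x in O, (U x * plap V x - V x * plap U x) = 0 := by
  classical
  have hKc : IsOpen Kᶜ := hK.isClosed.isOpen_compl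
  -- first derivatives along coordinates
  set dd : ((Fin (n+1) → ℝ) → ℝ) → Fin (n+1) → (Fin (n+1) → ℝ) → ℝ :=
    fun w i y => fderiv ℝ w y (Pi.single i 1) with hdd
  -- V vanishes near any point outside K
  have hV0 : ∀ x ∉ K, fderiv ℝ V x = 0 := fderiv_zero_on_isOpen hKc (fun x hx => hVK x hx)
  have hdV0 : ∀ i, ∀ x ∉ K, dd V i x = 0 := fun i x hx => by simp [hdd, hV0 x hx]
  have hdV0' : ∀ i, ∀ x ∉ K, fderiv ℝ (dd V i) x = 0 :=
    fun i => fderiv_zero_on_isOpen hKc (hdV0 i)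
  -- the vector field and its derivative
  set F : Fin (n+1) → (Fin (n+1) → ℝ) → ℝ :=
    fun i x => if x ∈ O then U x * dd V i x - V x * dd U i x else 0 with hF
  set F' : Fin (n+1) → (Fin (n+1) → ℝ) → (Fin (n+1) → ℝ) →L[ℝ] ℝ := fun i x =>
    if x ∈ O then
      (U x • fderiv ℝ (dd V i) x + dd V i x • fderiv ℝ U x) -
      (V x • fderiv ℝ (dd U i) x + dd U i x • fderiv ℝ V x)
    else 0 with hF'
  have hF0 : ∀ i, ∀ x ∉ K, F i x = 0 := by
    intro i x hx
    by_cases hxO : x ∈ O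
    · simp [hF, if_pos hxO, hVK x hx, hdV0 i x hx]
    · simp [hF, if_neg hxO]
  have hF'0 : ∀ i, ∀ x ∉ K, F' i x = 0 := by
    intro i x hx
    by_cases hxO : x ∈ O
    · simp [hF', if_pos hxO, hVK x hx, hdV0 i x hx, hdV0' i x hx, hV0 x hx]
    · simp [hF', if_neg hxO]
  -- differentiability pieces
  have hVd : ∀ x, DifferentiableAt ℝ V x := fun x =>
    (hV.differentiable (by norm_num)).differentiableAt
  have hdVc : ∀ i, ContDiff ℝ 1 (dd V i) := fun i =>
    (hV.fderiv_right (by norm_num)).clm_apply contDiff_const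
  have hdVd : ∀ i x, DifferentiableAt ℝ (dd V i) x := fun i x =>
    ((hdVc i).differentiable one_ne_zero).differentiableAt
  have hUx : ∀ x ∈ O, ContDiffAt ℝ 2 U x := fun x hx => hU.contDiffAt (hO.mem_nhds hx)
  have hUd : ∀ x ∈ O, DifferentiableAt ℝ U x := fun x hx =>
    (hUx x hx).differentiableAt (by norm_num)
  have hdUx : ∀ i, ∀ x ∈ O, ContDiffAt ℝ 1 (dd U i) x := fun i x hx =>
    ((hUx x hx).fderiv_right (by norm_num)).clm_apply contDiffAt_const
  have hdUd : ∀ i, ∀ x ∈ O, DifferentiableAt ℝ (dd U i) x := fun i x hx =>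
    (hdUx i x hx).differentiableAt one_ne_zero
  -- F is differentiable everywhere with derivative F'
  have hFd : ∀ x i, HasFDerivAt (F i) (F' i x) x := by
    intro x i
    by_cases hx : x ∈ O
    · have hG : HasFDerivAt (fun y => U y * dd V i y - V y * dd U i y)
          ((U x • fderiv ℝ (dd V i) x + dd V i x • fderiv ℝ U x) -
           (V x • fderiv ℝ (dd U i) x + dd U i x • fderiv ℝ V x)) x := by
        exact (((hUd x hx).hasFDerivAt.mul (hdVd i x).hasFDerivAt).sub
          ((hVd x).hasFDerivAt.mul ((hdUd i x hx).hasFDerivAt)))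
      have heq : F i =ᶠ[nhds x] fun y => U y * dd V i y - V y * dd U i y := by
        filter_upwards [hO.mem_nhds hx] with y hy
        simp [hF, if_pos hy]
      simp only [hF']
      rw [if_pos hx]
      exact hG.congr_of_eventuallyEq heq
    · have hxK : x ∉ K := fun h => hx (hKO h)
      have heq : F i =ᶠ[nhds x] fun _ => 0 := by
        filter_upwards [hKc.mem_nhds hxK] with y hy
        exact hF0 i y hy
      have : HasFDerivAt (fun _ : Fin (n+1) → ℝ => (0:ℝ))
          (0 : (Fin (n+1) → ℝ) →L[ℝ] ℝ) x := hasFDerivAt_const (0:ℝ) x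
      simp only [hF']
      rw [if_neg hx]
      exact this.congr_of_eventuallyEq heq
  -- divergence
  set D : (Fin (n+1) → ℝ) → ℝ := fun x => ∑ i, F' i x (Pi.single i 1) with hD
  have hD0 : ∀ x ∉ K, D x = 0 := by
    intro x hx
    simp [hD, fun i => hF'0 i x hx]
  have hDO : ∀ x ∈ O, D x = U x * plap V x - V x * plap U x := by
    intro x hx
    have : ∀ i : Fin (n+1), F' i x (Pi.single i 1) =
        U x * fderiv ℝ (dd V i) x (Pi.single i 1)
          - V x * fderiv ℝ (dd U i) x (Pi.single i 1) := by
      intro i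
      simp only [hF', if_pos hx, ContinuousLinearMap.sub_apply, ContinuousLinearMap.add_apply,
        ContinuousLinearMap.smul_apply, smul_eq_mul]
      have h1 : fderiv ℝ U x (Pi.single i 1) = dd U i x := rfl
      have h2 : fderiv ℝ V x (Pi.single i 1) = dd V i x := rfl
      rw [h1, h2]; ring
    rw [hD]
    simp only [this]
    rw [Finset.sum_sub_distrib, ← Finset.mul_sum, ← Finset.mul_sum]
    rfl
  -- continuity of the divergence
  have hDc : Continuous D := by
    rw [continuous_iff_continuousAt]
    intro x
    by_cases hx : x ∈ O
    · -- continuous on O via the second-derivative formula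
      have hUc1 : ContDiffOn ℝ 1 (fderiv ℝ U) O := hU.fderiv_of_isOpen hO (by norm_num)
      have hcO : ContinuousOn D O := by
        have : ∀ i : Fin (n+1), ContinuousOn
            (fun y => U y * fderiv ℝ (dd V i) y (Pi.single i 1)
              - V y * fderiv ℝ (dd U i) y (Pi.single i 1)) O := by
          intro i
          apply ContinuousOn.sub
          · exact hU.continuousOn.mul
              ((((hdVc i).continuous_fderiv one_ne_zero).clm_apply continuous_const).continuousOn)
          · exact hV.continuous.continuousOn.mul
              ((((hUc1.clm_apply contDiffOn_const).continuousOn_fderiv_of_isOpen hO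
                le_rfl).clm_apply continuousOn_const))
        have hsum : ContinuousOn (fun y => ∑ i : Fin (n+1),
            (U y * fderiv ℝ (dd V i) y (Pi.single i 1)
              - V y * fderiv ℝ (dd U i) y (Pi.single i 1))) O := by
          apply continuousOn_finset_sum
          intro i _
          exact this i
        apply hsum.congr
        intro y hy
        rw [hDO y hy]
        show _ = ∑ i : Fin (n+1), (U y * fderiv ℝ (dd V i) y (Pi.single i 1)
              - V y * fderiv ℝ (dd U i) y (Pi.single i 1))
        rw [Finset.sum_sub_distrib, ← Finset.mul_sum, ← Finset.mul_sum]
        rfl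
      exact hcO.continuousAt (hO.mem_nhds hx)
    · have hxK : x ∉ K := fun h => hx (hKO h)
      have heq : D =ᶠ[nhds x] fun _ => 0 := by
        filter_upwards [hKc.mem_nhds hxK] with y hy
        exact hD0 y hy
      exact (continuousAt_const).congr heq.symm
  -- the bounding box
  obtain ⟨R, hR⟩ := hK.isBounded.subset_closedBall 0
  set R' : ℝ := max R 0 with hR'
  have hKR : K ⊆ Metric.closedBall 0 R' :=
    hR.trans (Metric.closedBall_subset_closedBall (le_max_left _ _))
  set a : Fin (n+1) → ℝ := fun _ => -(R'+1) with ha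
  set b : Fin (n+1) → ℝ := fun _ => (R'+1) with hb
  have hR'0 : (0:ℝ) ≤ R' := le_max_right _ _
  have hle : a ≤ b := fun i => by
    simp only [ha, hb]; linarith
  have hKIcc : K ⊆ Icc a b := by
    intro y hy
    have hy' : ‖y‖ ≤ R' := by
      have := hKR hy
      simpa [Metric.mem_closedBall, dist_zero_right] using this
    have hcoord : ∀ i, |y i| ≤ R' := by
      intro i
      have h1 : ‖y i‖ ≤ ‖y‖ := norm_le_pi_norm y i
      rw [Real.norm_eq_abs] at h1
      exact h1.trans hy'
    rw [Set.mem_Icc]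
    constructor
    · intro i
      have := (abs_le.mp (hcoord i)).1
      simp only [ha]; linarith
    · intro i
      have := (abs_le.mp (hcoord i)).2
      simp only [hb]; linarith
  have hnotK : ∀ (i : Fin (n+1)) (c : ℝ), R' < |c| → ∀ z : Fin n → ℝ,
      (i.insertNth c z) ∉ K := by
    intro i c hc z hmem
    set p : Fin (n+1) → ℝ := i.insertNth c z with hp
    have h1 : |p i| ≤ R' := by
      have := hKR hmem
      have h2 : ‖p‖ ≤ R' := by
        simpa [Metric.mem_closedBall, dist_zero_right] using this
      have h3 : ‖p i‖ ≤ ‖p‖ := norm_le_pi_norm p i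
      rw [Real.norm_eq_abs] at h3
      exact h3.trans h2
    have h4 : p i = c := Fin.insertNth_apply_same (α := fun _ => ℝ) i c z
    rw [h4] at h1
    exact absurd h1 (not_le.mpr hc)
  -- apply the divergence theorem on the box
  have hdiv := MeasureTheory.integral_divergence_of_hasFDerivAt_off_countable'
    a b hle F F' ∅ Set.countable_empty
    (fun i => (Differentiable.continuous (fun x => (hFd x i).differentiableAt)).continuousOn)
    (fun x _ i => hFd x i)
    (hDc.continuousOn.integrableOn_compact isCompact_Icc)
  have hfaces : ∀ i : Fin (n+1),
      ((∫ (x : Fin n → ℝ) in Icc (a ∘ i.succAbove) (b ∘ i.succAbove), F i (i.insertNth (b i) x)) -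
        ∫ (x : Fin n → ℝ) in Icc (a ∘ i.succAbove) (b ∘ i.succAbove), F i (i.insertNth (a i) x)) = 0 := by
    intro i
    have h1 : ∀ z : Fin n → ℝ, F i (i.insertNth (b i) z) = 0 := by
      intro z
      apply hF0
      apply hnotK i
      show R' < |(R'+1)|
      rw [abs_of_nonneg (by linarith)]
      linarith
    have h2 : ∀ z : Fin n → ℝ, F i (i.insertNth (a i) z) = 0 := by
      intro z
      apply hF0
      apply hnotK i
      show R' < |(-(R'+1))|
      rw [abs_neg, abs_of_nonneg (by linarith)]
      linarith
    simp [h1, h2]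
  rw [Finset.sum_eq_zero (fun i _ => hfaces i)] at hdiv
  -- identify the two set integrals with the full integral
  have hIccD : ∫ x in Icc a b, D x = ∫ x, D x :=
    setIntegral_eq_integral_of_forall_compl_eq_zero
      (fun x hx => hD0 x (fun hK' => hx (hKIcc hK')))
  have hOD : ∫ x in O, D x = ∫ x, D x :=
    setIntegral_eq_integral_of_forall_compl_eq_zero
      (fun x hx => hD0 x (fun hK' => hx (hKO hK')))
  have hOint : ∫ x in O, (U x * plap V x - V x * plap U x) = ∫ x in O, D x := by
    apply setIntegral_congr_fun hO.measurableSet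
    intro y hy
    exact (hDO y hy).symm
  rw [hOint, hOD, ← hIccD]
  exact hdiv

lemma plap_comp {n : ℕ} (w : EuclideanSpace ℝ (Fin (n+1)) → ℝ) (y : Fin (n+1) → ℝ) :
    plap (w ∘ ⇑(EuclideanSpace.equiv (Fin (n+1)) ℝ).symm) y
      = lap w ((EuclideanSpace.equiv (Fin (n+1)) ℝ).symm y) := by
  set e := EuclideanSpace.equiv (Fin (n+1)) ℝ with he
  have hsingle : ∀ i : Fin (n+1),
      e.symm (Pi.single i 1) = EuclideanSpace.single i (1:ℝ) := fun i => rfl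
  have h1 : ∀ (i : Fin (n+1)) (z : Fin (n+1) → ℝ),
      fderiv ℝ (w ∘ ⇑e.symm) z (Pi.single i 1)
        = fderiv ℝ w (e.symm z) (EuclideanSpace.single i (1:ℝ)) := by
    intro i z
    rw [e.symm.comp_right_fderiv]
    simp only [ContinuousLinearMap.coe_comp', Function.comp_apply,
      ContinuousLinearEquiv.coe_coe]
    rw [hsingle]
  unfold plap lap
  apply Finset.sum_congr rfl
  intro i _
  have h2 : (fun z => fderiv ℝ (w ∘ ⇑e.symm) z (Pi.single i 1))
      = (fun t => fderiv ℝ w t (EuclideanSpace.single i (1:ℝ))) ∘ ⇑e.symm :=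
    funext fun z => h1 i z
  rw [h2, e.symm.comp_right_fderiv]
  simp only [ContinuousLinearMap.coe_comp', Function.comp_apply,
    ContinuousLinearEquiv.coe_coe]
  rw [hsingle]

theorem green_eucl {N : ℕ} {Ω K : Set (EuclideanSpace ℝ (Fin N))} (hΩ : IsOpen Ω)
    (hK : IsCompact K) (hKO : K ⊆ Ω) {u v : EuclideanSpace ℝ (Fin N) → ℝ}
    (hu : ContDiffOn ℝ 2 u Ω) (hv : ContDiff ℝ 2 v) (hvK : ∀ x ∉ K, v x = 0) :
    ∫ x in Ω, (u x * lap v x - v x * lap u x) = 0 := by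
  cases N with
  | zero =>
      have : ∀ (w : EuclideanSpace ℝ (Fin 0) → ℝ) (x), lap w x = 0 := by
        intro w x; simp [lap]
      simp [this]
  | succ n =>
      set e := EuclideanSpace.equiv (Fin (n+1)) ℝ with he
      set m := ((MeasurableEquiv.toLp 2 (Fin (n+1) → ℝ)).symm).symm with hm
      have hcoe : ⇑m = ⇑e.symm := rfl
      have hMP : MeasurePreserving m volume volume :=
        (EuclideanSpace.volume_preserving_symm_measurableEquiv_toLp (Fin (n+1))).symm
      have hint := hMP.setIntegral_preimage_emb m.measurableEmbedding
        (fun x => u x * lap v x - v x * lap u x) Ω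
      rw [← hint]
      set O : Set (Fin (n+1) → ℝ) := ⇑m ⁻¹' Ω with hO
      set U : (Fin (n+1) → ℝ) → ℝ := u ∘ ⇑e.symm with hU
      set V : (Fin (n+1) → ℝ) → ℝ := v ∘ ⇑e.symm with hV
      have heq : (fun z => u (m z) * lap v (m z) - v (m z) * lap u (m z))
          = fun z => U z * plap V z - V z * plap U z := by
        funext z
        have h1 : plap V z = lap v (e.symm z) := plap_comp v z
        have h2 : plap U z = lap u (e.symm z) := plap_comp u z
        rw [h1, h2]
        rfl
      calc ∫ z in O, (u (m z) * lap v (m z) - v (m z) * lap u (m z))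
          = ∫ z in O, (U z * plap V z - V z * plap U z) := by rw [heq]
        _ = 0 := by
            apply green_pi (O := O) (K := ⇑e.symm ⁻¹' K)
            · exact hΩ.preimage e.symm.continuous
            · rw [← e.image_eq_preimage_symm]
              exact hK.image e.continuous
            · exact fun z hz => hKO hz
            · exact hu.comp (e.symm.contDiff.contDiffOn) (fun z hz => hz)
            · exact hv.comp e.symm.contDiff
            · exact fun z hz => hvK _ hz

end GreenHelpers

lemma integrableOn_of_compact_support {N : ℕ} {Ω K : Set (EuclideanSpace ℝ (Fin N))}
    (hΩm : MeasurableSet Ω) (hK : IsCompact K) (hKΩ : K ⊆ Ω)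
    {f : EuclideanSpace ℝ (Fin N) → ℝ} (hf : ContinuousOn f Ω)
    (h0 : ∀ x ∈ Ω \ K, f x = 0) : IntegrableOn f Ω := by
  have h1 : IntegrableOn f K := ContinuousOn.integrableOn_compact hK (hf.mono hKΩ)
  have h2 : IntegrableOn f (Ω \ K) := by
    apply (integrableOn_zero (μ := volume)).congr_fun
      (fun x hx => (h0 x hx).symm) (hΩm.diff hK.measurableSet)
  have h3 : IntegrableOn f ((Ω \ K) ∪ K) := h2.union h1
  apply h3.mono_set
  intro x hx
  by_cases hxK : x ∈ K
  · exact Or.inr hxK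
  · exact Or.inl ⟨hx, hxK⟩

lemma step_k {N : ℕ} {Ω : Set (EuclideanSpace ℝ (Fin N))}
    (hΩo : IsOpen Ω) (hclK : IsCompact (closure Ω))
    {f Φ u : EuclideanSpace ℝ (Fin N) → ℝ} {P lam : ℝ}
    (hfc : ContinuousOn f (closure Ω)) (hf0 : ∀ x ∈ closure Ω, 0 ≤ f x)
    (hΦc : ContinuousOn Φ (closure Ω)) (hΦ2 : ContDiffOn ℝ 2 Φ Ω)
    (hΦeq : ∀ x ∈ Ω, lap Φ x = -1)
    (hΦbd : ∀ x ∈ frontier Ω, Φ x = 0)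
    (hΦpos : ∀ x ∈ Ω, 0 < Φ x)
    (hlam : 0 < lam)
    (hu : IsSolutionT Ω f P lam u)
    {c : ℝ} (hc : 0 < c) :
    ∫ x in Ω, (lam * f x + P) * (Ω.indicator (fun y => cutg (c * Φ y) / c) x)
      ≤ (volume Ω).toReal := by
  obtain ⟨huc, hu2, hueq, hubd, hub0⟩ := hu
  have hΩm : MeasurableSet Ω := hΩo.measurableSet
  have hvol : volume Ω < ⊤ := lt_of_le_of_lt (measure_mono subset_closure) hclK.measure_lt_top
  set φ : EuclideanSpace ℝ (Fin N) → ℝ :=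
    Ω.indicator (fun y => cutg (c * Φ y) / c) with hφ
  set K : Set (EuclideanSpace ℝ (Fin N)) := closure Ω ∩ Φ ⁻¹' (Ici (1/c)) with hKdef
  have hKcl : IsClosed K := hΦc.preimage_isClosed_of_isClosed isClosed_closure isClosed_Ici
  have hKcomp : IsCompact K := hclK.of_isClosed_subset hKcl inter_subset_left
  have hKΩ : K ⊆ Ω := by
    rintro x ⟨hx1, hx2⟩
    by_contra hxΩ
    have hxf : x ∈ frontier Ω := by
      rw [frontier, hΩo.interior_eq]
      exact ⟨hx1, hxΩ⟩
    have h0 : Φ x = 0 := hΦbd x hxf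
    have h1 : (1:ℝ)/c ≤ 0 := by rw [← h0]; exact hx2
    have h2 : (0:ℝ) < 1/c := by positivity
    linarith
  have hφ0 : ∀ y ∉ K, φ y = 0 := by
    intro y hy
    by_cases hyΩ : y ∈ Ω
    · have h1 : ¬ ((1:ℝ)/c ≤ Φ y) := fun h => hy ⟨subset_closure hyΩ, h⟩
      push_neg at h1
      have h2 : c * Φ y ≤ 1 := by
        rw [lt_div_iff₀ hc] at h1
        rw [mul_comm]
        exact h1.le
      simp only [hφ, Set.indicator_of_mem hyΩ, cutg_zero_of_le h2, zero_div]
    · simp [hφ, Set.indicator_of_notMem hyΩ]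
  have hφcd : ContDiff ℝ 2 φ := by
    rw [contDiff_iff_contDiffAt]
    intro x
    by_cases hx : x ∈ Ω
    · have h1 : ContDiffAt ℝ 2 (fun y => cutg (c * Φ y) / c) x := by
        have hinner : ContDiffAt ℝ 2 (fun y => c * Φ y) x :=
          contDiffAt_const.mul (hΦ2.contDiffAt (hΩo.mem_nhds hx))
        exact (cutg_contDiff.contDiffAt.comp x hinner).div_const c
      apply h1.congr_of_eventuallyEq
      filter_upwards [hΩo.mem_nhds hx] with y hy
      simp [hφ, Set.indicator_of_mem hy]
    · have hxK : x ∉ K := fun h => hx (hKΩ h)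
      have h1 : ContDiffAt ℝ 2 (fun _ => (0:ℝ)) x := contDiffAt_const
      apply h1.congr_of_eventuallyEq
      filter_upwards [hKcl.isOpen_compl.mem_nhds hxK] with y hy
      exact hφ0 y hy
  have hφnonneg : ∀ y, 0 ≤ φ y := by
    intro y
    by_cases hy : y ∈ Ω
    · simp only [hφ, Set.indicator_of_mem hy]
      exact div_nonneg (cutg_nonneg _) hc.le
    · simp [hφ, Set.indicator_of_notMem hy]
  -- laplacian formula
  set Q : EuclideanSpace ℝ (Fin N) → ℝ :=
    fun x => ∑ i, (fderiv ℝ Φ x (EuclideanSpace.single i 1))^2 with hQ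
  have hQ0 : ∀ x, 0 ≤ Q x := fun x => Finset.sum_nonneg fun i _ => sq_nonneg _
  have hlin : ∀ t : ℝ, HasDerivAt (fun s : ℝ => c * s) c t := by
    intro t
    simpa using (hasDerivAt_id t).const_mul c
  have hG : ∀ t, HasDerivAt (fun s => cutg (c * s) / c) (cutg' (c * t)) t := by
    intro t
    have h1 : HasDerivAt (fun s => cutg (c * s)) (cutg' (c * t) * c) t := by
      have := (cutg_hasDerivAt (c * t)).comp t (hlin t)
      exact this
    have h2 := h1.div_const c
    rwa [mul_div_cancel_right₀ _ hc.ne'] at h2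
  have hG' : ∀ t, HasDerivAt (fun s => cutg' (c * s)) (c * (bumpψ (c * t) / bumpA)) t := by
    intro t
    have h1 : HasDerivAt (fun s => cutg' (c * s)) (bumpψ (c * t) / bumpA * c) t := by
      have := (cutg'_hasDerivAt (c * t)).comp t (hlin t)
      exact this
    rwa [mul_comm] at h1
  have hlapφ : ∀ x ∈ Ω, lap φ x
      = -(cutg' (c * Φ x)) + c * (bumpψ (c * Φ x) / bumpA) * Q x := by
    intro x hx
    have hev : φ =ᶠ[nhds x] fun y => cutg (c * Φ y) / c := by
      filter_upwards [hΩo.mem_nhds hx] with y hy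
      simp [hφ, Set.indicator_of_mem hy]
    rw [lap_congr hev]
    have h3 := lap_comp (G := fun s => cutg (c * s) / c) (G' := fun s => cutg' (c * s))
      (G'' := fun s => c * (bumpψ (c * s) / bumpA)) hΩo hΦ2 hG hG' hx
    rw [h3, hΦeq x hx]
    ring
  have hbound : ∀ x ∈ Ω, u x * (-(lap φ x)) ≤ 1 := by
    intro x hx
    rw [hlapφ x hx]
    have hQn : 0 ≤ c * (bumpψ (c * Φ x) / bumpA) * Q x :=
      mul_nonneg (mul_nonneg hc.le (div_nonneg (bumpψ_nonneg _) bumpA_pos.le)) (hQ0 x)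
    have h1 : -(-(cutg' (c * Φ x)) + c * (bumpψ (c * Φ x) / bumpA) * Q x)
        ≤ cutg' (c * Φ x) := by linarith
    have h2 : u x * (-(-(cutg' (c * Φ x)) + c * (bumpψ (c * Φ x) / bumpA) * Q x))
        ≤ u x * cutg' (c * Φ x) := mul_le_mul_of_nonneg_left h1 (hubd x hx).1
    apply h2.trans
    calc u x * cutg' (c * Φ x) ≤ 1 * 1 :=
          mul_le_mul (hubd x hx).2.le (cutg'_le_one _) (cutg'_nonneg _) zero_le_one
      _ = 1 := by ring
  -- Green's identity
  have hgreen : ∫ x in Ω, (u x * lap φ x - φ x * lap u x) = 0 :=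
    green_eucl hΩo hKcomp hKΩ hu2 hφcd hφ0
  have hintA : IntegrableOn (fun x => u x * lap φ x) Ω := by
    apply integrableOn_of_compact_support hΩm hKcomp hKΩ
    · exact (huc.mono subset_closure).mul (continuous_lap hφcd).continuousOn
    · intro x hx
      have hz : lap φ x = 0 := by
        apply lap_of_locally_zero
        filter_upwards [hKcl.isOpen_compl.mem_nhds hx.2] with y hy
        exact hφ0 y hy
      rw [hz, mul_zero]
  have hintB : IntegrableOn (fun x => φ x * lap u x) Ω := by
    apply integrableOn_of_compact_support hΩm hKcomp hKΩ
    · exact hφcd.continuous.continuousOn.mul (continuousOn_lap hΩo hu2)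
    · intro x hx
      rw [hφ0 x hx.2, zero_mul]
  have hgreen2 : ∫ x in Ω, u x * lap φ x = ∫ x in Ω, φ x * lap u x := by
    have h2 : (∫ x in Ω, u x * lap φ x) - ∫ x in Ω, φ x * lap u x = 0 := by
      rw [← integral_sub hintA hintB]; exact hgreen
    linarith
  have hint1 : IntegrableOn (fun x => (lam * f x + P) * φ x) Ω := by
    apply integrableOn_of_compact_support hΩm hKcomp hKΩ
    · exact ((continuousOn_const.mul (hfc.mono subset_closure)).add
        continuousOn_const).mul hφcd.continuous.continuousOn
    · intro x hx; rw [hφ0 x hx.2, mul_zero]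
  have hint2 : IntegrableOn (fun x => u x * (-(lap φ x))) Ω := by
    have e : (fun x => u x * (-(lap φ x))) = fun x => -(u x * lap φ x) := by funext x; ring
    rw [e]; exact hintA.neg
  have hint3 : IntegrableOn (fun x => (-(lap u x)) * φ x) Ω := by
    have e : (fun x => (-(lap u x)) * φ x) = fun x => -(φ x * lap u x) := by funext x; ring
    rw [e]; exact hintB.neg
  have hstep1 : ∫ x in Ω, (lam * f x + P) * φ x ≤ ∫ x in Ω, (-(lap u x)) * φ x := by
    apply setIntegral_mono_on hint1 hint3 hΩm
    intro x hx
    have heq := hueq x hx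
    have h1u : 0 < 1 - u x := by linarith [(hubd x hx).2]
    have hsq : 0 < (1 - u x)^2 := by positivity
    have hsqle : (1 - u x)^2 ≤ 1 := by
      have hle : 1 - u x ≤ 1 := by linarith [(hubd x hx).1]
      calc (1 - u x)^2 ≤ 1^2 := pow_le_pow_left₀ h1u.le hle 2
        _ = 1 := one_pow 2
    have hfx : 0 ≤ f x := hf0 x (subset_closure hx)
    have hmain : lam * f x ≤ lam * f x / (1 - u x)^2 := by
      rw [le_div_iff₀ hsq]
      exact mul_le_of_le_one_right (by positivity) hsqle
    have hle2 : lam * f x + P ≤ -(lap u x) := by rw [heq]; linarith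
    exact mul_le_mul_of_nonneg_right hle2 (hφnonneg x)
  have hstep2 : ∫ x in Ω, (-(lap u x)) * φ x = ∫ x in Ω, u x * (-(lap φ x)) := by
    have e1 : (fun x => (-(lap u x)) * φ x) = fun x => -(φ x * lap u x) := by funext x; ring
    have e2 : (fun x => u x * (-(lap φ x))) = fun x => -(u x * lap φ x) := by funext x; ring
    rw [e1, e2, integral_neg, integral_neg, hgreen2]
  have hconst : IntegrableOn (fun _ => (1:ℝ)) Ω := by
    exact integrableOn_const hvol.ne
  have hstep3 : ∫ x in Ω, u x * (-(lap φ x)) ≤ ∫ x in Ω, (1:ℝ) :=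
    setIntegral_mono_on hint2 hconst hΩm hbound
  have h1 : ∫ x in Ω, (1:ℝ) = (volume Ω).toReal := by simp [Measure.real]
  calc ∫ x in Ω, (lam * f x + P) * φ x
      ≤ ∫ x in Ω, u x * (-(lap φ x)) := by rw [← hstep2]; exact hstep1
    _ ≤ (volume Ω).toReal := by rw [← h1]; exact hstep3

lemma key_bound {N : ℕ} (Ω : Set (EuclideanSpace ℝ (Fin N)))
    (hΩo : IsOpen Ω) (hΩb : Bornology.IsBounded Ω) (hΩne : Ω.Nonempty)
    (f : EuclideanSpace ℝ (Fin N) → ℝ) (hfc : ContinuousOn f (closure Ω))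
    (hf0 : ∀ x ∈ closure Ω, 0 ≤ f x) (hfne : ∃ x ∈ Ω, f x ≠ 0)
    (Φ : EuclideanSpace ℝ (Fin N) → ℝ)
    (hΦc : ContinuousOn Φ (closure Ω)) (hΦ2 : ContDiffOn ℝ 2 Φ Ω)
    (hΦeq : ∀ x ∈ Ω, lap Φ x = -1)
    (hΦbd : ∀ x ∈ frontier Ω, Φ x = 0)
    (hΦpos : ∀ x ∈ Ω, 0 < Φ x)
    (P : ℝ) (lam : ℝ) (hlam : 0 < lam)
    (u : EuclideanSpace ℝ (Fin N) → ℝ) (hu : IsSolutionT Ω f P lam u) :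
    lam ≤ ((volume Ω).toReal - P * ∫ x in Ω, Φ x) / (∫ x in Ω, Φ x * f x) := by
  have hΩm : MeasurableSet Ω := hΩo.measurableSet
  have hclK : IsCompact (closure Ω) :=
    Metric.isCompact_of_isClosed_isBounded isClosed_closure hΩb.closure
  have hvol : volume Ω < ⊤ := lt_of_le_of_lt (measure_mono subset_closure) hclK.measure_lt_top
  have hIΦ : IntegrableOn Φ Ω :=
    (ContinuousOn.integrableOn_compact hclK hΦc).mono_set subset_closure
  have hIΦf : IntegrableOn (fun x => Φ x * f x) Ω :=
    (ContinuousOn.integrableOn_compact hclK (hΦc.mul hfc)).mono_set subset_closure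
  -- per-k inequality
  have hk : ∀ k : ℕ, ∫ x in Ω, (lam * f x + P) *
      (Ω.indicator (fun y => cutg (((k:ℝ)+1) * Φ y) / ((k:ℝ)+1)) x) ≤ (volume Ω).toReal := by
    intro k
    have hc : (0:ℝ) < (k:ℝ) + 1 := by positivity
    exact step_k hΩo hclK hfc hf0 hΦc hΦ2 hΦeq hΦbd hΦpos hlam hu hc
  -- max bounds
  obtain ⟨zf, hzf, hzfmax⟩ := hclK.exists_isMaxOn hΩne.closure hfc
  obtain ⟨zΦ, hzΦ, hzΦmax⟩ := hclK.exists_isMaxOn hΩne.closure hΦc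
  obtain ⟨x₁, hx₁⟩ := hΩne
  have hBf0 : 0 ≤ f zf := hf0 zf hzf
  have hBΦ : ∀ x ∈ Ω, Φ x ≤ Φ zΦ := fun x hx => hzΦmax (subset_closure hx)
  have hBΦ0 : 0 ≤ Φ zΦ := (hΦpos x₁ hx₁).le.trans (hBΦ x₁ hx₁)
  set C : ℝ := (lam * f zf + |P|) * Φ zΦ with hC
  have hcut_le : ∀ (c : ℝ), 0 < c → ∀ y ∈ Ω, cutg (c * Φ y) / c ≤ Φ y := by
    intro c hc y hy
    rw [div_le_iff₀ hc]
    calc cutg (c * Φ y) ≤ c * Φ y := cutg_le _ (mul_nonneg hc.le (hΦpos y hy).le)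
      _ = Φ y * c := mul_comm _ _
  have hcut_ge : ∀ (c : ℝ), 0 < c → ∀ y, Φ y - 2/c ≤ cutg (c * Φ y) / c := by
    intro c hc y
    have h1 : (c * Φ y - 2)/c ≤ cutg (c * Φ y) / c := by
      gcongr
      exact cutg_ge _
    have h2 : (c * Φ y - 2)/c = Φ y - 2/c := by
      field_simp
    rw [h2] at h1
    exact h1
  -- dominated convergence
  have htend : Tendsto (fun k : ℕ => ∫ x in Ω, (lam * f x + P) *
      (Ω.indicator (fun y => cutg (((k:ℝ)+1) * Φ y) / ((k:ℝ)+1)) x)) atTop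
      (𝓝 (∫ x in Ω, (lam * f x + P) * Φ x)) := by
    apply tendsto_integral_of_dominated_convergence (bound := fun _ => C)
    · intro k
      apply ContinuousOn.aestronglyMeasurable _ hΩm
      have hcont : ContinuousOn
          (fun x => (lam * f x + P) * (cutg (((k:ℝ)+1) * Φ x) / ((k:ℝ)+1))) Ω := by
        apply ContinuousOn.mul
        · exact (continuousOn_const.mul (hfc.mono subset_closure)).add continuousOn_const
        · exact (cutg_contDiff.continuous.comp_continuousOn
            (continuousOn_const.mul (hΦc.mono subset_closure))).div_const _
      apply hcont.congr
      intro x hx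
      simp only [Set.indicator_of_mem hx]
    · exact integrableOn_const hvol.ne
    · intro k
      rw [ae_restrict_iff' hΩm]
      apply ae_of_all
      intro x hx
      have hc : (0:ℝ) < (k:ℝ) + 1 := by positivity
      rw [Set.indicator_of_mem hx, Real.norm_eq_abs, abs_mul]
      have h1 : |lam * f x + P| ≤ lam * f zf + |P| := by
        calc |lam * f x + P| ≤ |lam * f x| + |P| := abs_add_le _ _
          _ ≤ lam * f zf + |P| := by
              apply add_le_add _ le_rfl
              rw [abs_of_nonneg (mul_nonneg hlam.le (hf0 x (subset_closure hx)))]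
              exact mul_le_mul_of_nonneg_left (hzfmax (subset_closure hx)) hlam.le
      have h2 : |cutg (((k:ℝ)+1) * Φ x) / ((k:ℝ)+1)| ≤ Φ zΦ := by
        rw [abs_of_nonneg (div_nonneg (cutg_nonneg _) hc.le)]
        exact (hcut_le _ hc x hx).trans (hBΦ x hx)
      exact mul_le_mul h1 h2 (abs_nonneg _)
        (add_nonneg (mul_nonneg hlam.le hBf0) (abs_nonneg _))
    · rw [ae_restrict_iff' hΩm]
      apply ae_of_all
      intro x hx
      have hlow : Tendsto (fun k : ℕ => Φ x - 2/((k:ℝ)+1)) atTop (𝓝 (Φ x)) := by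
        have h0 : Tendsto (fun k : ℕ => 2/((k:ℝ)+1)) atTop (𝓝 0) := by
          have h2 := tendsto_one_div_add_atTop_nhds_zero_nat.const_mul (2:ℝ)
          simp only [mul_zero] at h2
          convert h2 using 2 with k
          ring
        simpa using tendsto_const_nhds.sub h0
      have hsq : Tendsto (fun k : ℕ => cutg (((k:ℝ)+1) * Φ x)/((k:ℝ)+1)) atTop (𝓝 (Φ x)) := by
        apply tendsto_of_tendsto_of_tendsto_of_le_of_le hlow tendsto_const_nhds
        · intro k
          exact hcut_ge ((k:ℝ)+1) (by positivity) x
        · intro k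
          exact hcut_le ((k:ℝ)+1) (by positivity) x hx
      have hrw : (fun k : ℕ => (lam * f x + P) *
          (Ω.indicator (fun y => cutg (((k:ℝ)+1) * Φ y)/((k:ℝ)+1)) x))
          = fun k : ℕ => (lam * f x + P) * (cutg (((k:ℝ)+1) * Φ x)/((k:ℝ)+1)) :=
        funext fun k => by simp only [Set.indicator_of_mem hx]
      rw [hrw]
      exact hsq.const_mul _
  have hlim : ∫ x in Ω, (lam * f x + P) * Φ x ≤ (volume Ω).toReal :=
    le_of_tendsto htend (Filter.Eventually.of_forall hk)
  have hsplit : ∫ x in Ω, (lam * f x + P) * Φ x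
      = lam * (∫ x in Ω, Φ x * f x) + P * ∫ x in Ω, Φ x := by
    have e : (fun x => (lam * f x + P) * Φ x) = fun x => lam * (Φ x * f x) + P * Φ x :=
      funext fun x => by ring
    rw [e, integral_add (hIΦf.const_mul lam) (hIΦ.const_mul P),
      integral_const_mul, integral_const_mul]
  -- positivity of ∫ Φ f
  obtain ⟨x₀, hx₀, hfx₀⟩ := hfne
  have hf₀pos : 0 < f x₀ := lt_of_le_of_ne (hf0 x₀ (subset_closure hx₀)) (Ne.symm hfx₀)
  have hε : 0 < Φ x₀ * f x₀ := mul_pos (hΦpos x₀ hx₀) hf₀pos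
  have hcontAt : ContinuousAt (fun x => Φ x * f x) x₀ :=
    ((hΦc.mono subset_closure).mul (hfc.mono subset_closure)).continuousAt (hΩo.mem_nhds hx₀)
  have hnhds : (fun x => Φ x * f x) ⁻¹' Ioi ((Φ x₀ * f x₀)/2) ∈ nhds x₀ :=
    hcontAt.preimage_mem_nhds (Ioi_mem_nhds (by linarith))
  obtain ⟨t, hts, hto, hxt⟩ := mem_nhds_iff.mp hnhds
  set W := t ∩ Ω with hW
  have hWo : IsOpen W := hto.inter hΩo
  have hWne : W.Nonempty := ⟨x₀, hxt, hx₀⟩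
  have hWΩ : W ⊆ Ω := inter_subset_right
  have hvolW : 0 < volume W := hWo.measure_pos volume hWne
  have hvolWfin : volume W < ⊤ :=
    lt_of_le_of_lt (measure_mono (hWΩ.trans subset_closure)) hclK.measure_lt_top
  have hIW : IntegrableOn (fun x => Φ x * f x) W := hIΦf.mono_set hWΩ
  have hWconst : IntegrableOn (fun _ => (Φ x₀ * f x₀)/2) W :=
    integrableOn_const hvolWfin.ne
  have h1 : (Φ x₀ * f x₀)/2 * (volume W).toReal ≤ ∫ x in W, Φ x * f x := by
    have hmono := setIntegral_mono_on hWconst hIW hWo.measurableSet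
      (fun x hx => (hts hx.1).le)
    calc (Φ x₀ * f x₀)/2 * (volume W).toReal
        = ∫ _ in W, (Φ x₀ * f x₀)/2 := by rw [setIntegral_const, smul_eq_mul, mul_comm]; rfl
      _ ≤ ∫ x in W, Φ x * f x := hmono
  have h2 : ∫ x in W, Φ x * f x ≤ ∫ x in Ω, Φ x * f x := by
    apply setIntegral_mono_set hIΦf
    · rw [EventuallyLE, ae_restrict_iff' hΩm]
      apply ae_of_all
      intro x hx
      exact mul_nonneg (hΦpos x hx).le (hf0 x (subset_closure hx))
    · exact HasSubset.Subset.eventuallyLE hWΩ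
  have hpos : 0 < ∫ x in Ω, Φ x * f x := by
    have hW2 : 0 < (Φ x₀ * f x₀)/2 * (volume W).toReal :=
      mul_pos (by linarith) (ENNReal.toReal_pos hvolW.ne' hvolWfin.ne)
    linarith
  rw [le_div_iff₀ hpos]
  rw [hsplit] at hlim
  linarith

end AuxProof

/-- If the problem admits a classical solution for the voltage `λ`, then
`λ ≤ (|Ω| - P∫_Ω Φ)/(∫_Ω Φ f)`; in particular the set of admissible voltages is
bounded above (so `λ*_P < ∞`). -/
theorem stmt1 {N : ℕ} (Ω : Set (EuclideanSpace ℝ (Fin N)))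
    (hΩo : IsOpen Ω) (hΩb : Bornology.IsBounded Ω) (hΩne : Ω.Nonempty)
    (f : EuclideanSpace ℝ (Fin N) → ℝ) (hfc : ContinuousOn f (closure Ω))
    (hf0 : ∀ x ∈ closure Ω, 0 ≤ f x) (hfne : ∃ x ∈ Ω, f x ≠ 0)
    (Φ : EuclideanSpace ℝ (Fin N) → ℝ)
    (hΦc : ContinuousOn Φ (closure Ω)) (hΦ2 : ContDiffOn ℝ 2 Φ Ω)
    (hΦeq : ∀ x ∈ Ω, lap Φ x = -1)
    (hΦbd : ∀ x ∈ frontier Ω, Φ x = 0)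
    (hΦpos : ∀ x ∈ Ω, 0 < Φ x)
    (Pstar P : ℝ) (hPstar : Pstar = 1 / (⨆ x ∈ Ω, Φ x))
    (hP0 : 0 ≤ P) (hP : P < Pstar)
    (lam : ℝ) (hlam : 0 < lam)
    (u : EuclideanSpace ℝ (Fin N) → ℝ) (hu : IsSolutionT Ω f P lam u) :
    lam ≤ ((volume Ω).toReal - P * ∫ x in Ω, Φ x) / (∫ x in Ω, Φ x * f x) ∧
      BddAbove {μ : ℝ | 0 < μ ∧ ∃ v, IsSolutionT Ω f P μ v} := by
  constructor
  · exact key_bound Ω hΩo hΩb hΩne f hfc hf0 hfne Φ hΦc hΦ2 hΦeq hΦbd hΦpos P lam hlam u hu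
  · refine ⟨((volume Ω).toReal - P * ∫ x in Ω, Φ x) / (∫ x in Ω, Φ x * f x), ?_⟩
    rintro μ ⟨hμ, v, hv⟩
    exact key_bound Ω hΩo hΩb hΩne f hfc hf0 hfne Φ hΦc hΦ2 hΦeq hΦbd hΦpos P μ hμ v hv
end

section
/- The half-period function L(τ) = (1/A)∫₁^τ dy/√(1 + τ(1+τ) - y² - τ(1+τ)/y), defined for τ > 1, satisfies lim_{τ→+∞} L(τ) = π/(2A). -/
open Filter Real MeasureTheory intervalIntegral Set Topology

lemma sqrtInvInt : IntervalIntegrable (fun s : ℝ => (Real.sqrt s)⁻¹) volume 0 1 := by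
  have h := intervalIntegrable_rpow' (a := 0) (b := 1) (r := -(1/2)) (by norm_num)
  rw [intervalIntegrable_iff_integrableOn_Ioc_of_le (by norm_num)] at h ⊢
  refine h.congr_fun (fun s hs => ?_) measurableSet_Ioc
  rw [Real.sqrt_eq_rpow, ← Real.rpow_neg hs.1.le]

lemma sqrtInvInt2 : IntervalIntegrable (fun s : ℝ => (Real.sqrt (1 - s))⁻¹) volume 0 1 := by
  have := (sqrtInvInt.comp_sub_left 1).symm
  simpa using this

lemma fIntOn : IntegrableOn (fun s : ℝ => (Real.sqrt (1 - s ^ 2))⁻¹) (Icc 0 1) volume := by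
  have h2 : IntegrableOn (fun s : ℝ => (Real.sqrt (1 - s))⁻¹) (Icc 0 1) volume := by
    rw [integrableOn_Icc_iff_integrableOn_Ioc]
    exact (intervalIntegrable_iff_integrableOn_Ioc_of_le (by norm_num)).1 sqrtInvInt2
  refine h2.integrable.mono ?_ ?_
  · refine (Measurable.aestronglyMeasurable ?_)
    fun_prop
  · refine (ae_restrict_iff' measurableSet_Icc).2 (Filter.Eventually.of_forall fun s hs => ?_)
    simp only [Real.norm_eq_abs, abs_of_nonneg (inv_nonneg.2 (Real.sqrt_nonneg _))]
    rcases eq_or_lt_of_le hs.2 with h1 | h1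
    · rw [h1]; norm_num
    · have hpos : 0 < Real.sqrt (1 - s) := Real.sqrt_pos.2 (by linarith)
      refine inv_anti₀ hpos (Real.sqrt_le_sqrt ?_)
      nlinarith [hs.1]

lemma arcsinInt : ∫ s in (0:ℝ)..1, (Real.sqrt (1 - s ^ 2))⁻¹ = π / 2 := by
  set f : ℝ → ℝ := fun s => (Real.sqrt (1 - s ^ 2))⁻¹ with hf
  have huIcc : uIcc (0:ℝ) 1 = Icc 0 1 := uIcc_of_le (by norm_num)
  have hIcc : IntegrableOn f (uIcc (0:ℝ) 1) volume := by rw [huIcc]; exact fIntOn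
  have hcont := (continuousOn_primitive_interval (a := (0:ℝ)) (b := 1) hIcc)
  have h1mem : (1:ℝ) ∈ uIcc (0:ℝ) 1 := by rw [huIcc]; exact ⟨by norm_num, le_refl 1⟩
  have T1 : Tendsto (fun b => ∫ x in (0:ℝ)..b, f x) (𝓝[Ioo (0:ℝ) 1] 1)
      (𝓝 (∫ x in (0:ℝ)..1, f x)) := by
    have := (hcont 1 h1mem).tendsto
    exact this.mono_left (nhdsWithin_mono 1 (by rw [huIcc]; exact Ioo_subset_Icc_self))
  have hFTC : ∀ b ∈ Ioo (0:ℝ) 1, (∫ x in (0:ℝ)..b, f x) = Real.arcsin b := by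
    intro b hb
    have hder : ∀ x ∈ uIcc (0:ℝ) b, HasDerivAt Real.arcsin (f x) x := by
      intro x hx
      rw [uIcc_of_le hb.1.le] at hx
      have := Real.hasDerivAt_arcsin (by linarith [hx.1] : x ≠ -1) (by linarith [hx.2, hb.2] : x ≠ 1)
      simpa [hf, one_div] using this
    have hint : IntervalIntegrable f volume 0 b := by
      have : IntegrableOn f (uIcc (0:ℝ) b) volume := by
        rw [uIcc_of_le hb.1.le]
        exact fIntOn.mono_set (Icc_subset_Icc le_rfl hb.2.le)
      exact this.intervalIntegrable
    rw [integral_eq_sub_of_hasDerivAt hder hint, Real.arcsin_zero, sub_zero]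
  have T2 : Tendsto Real.arcsin (𝓝[Ioo (0:ℝ) 1] 1) (𝓝 (π / 2)) := by
    have := Real.continuous_arcsin.continuousAt (x := (1:ℝ))
    rw [ContinuousAt, Real.arcsin_one] at this
    exact this.mono_left nhdsWithin_le_nhds
  haveI : (𝓝[Ioo (0:ℝ) 1] 1).NeBot := right_nhdsWithin_Ioo_neBot (by norm_num)
  have T1' : Tendsto (fun b => ∫ x in (0:ℝ)..b, f x) (𝓝[Ioo (0:ℝ) 1] 1) (𝓝 (π / 2)) := by
    refine T2.congr' ?_
    filter_upwards [self_mem_nhdsWithin] with b hb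
    exact (hFTC b hb).symm
  exact tendsto_nhds_unique T1 T1'

noncomputable def Gfun (τ s : ℝ) : ℝ :=
  ((τ - 1) * s + 1) / (s * (1 - s) * ((τ - 1) * s + 1 + τ + 1))

-- pointwise algebraic identity
lemma keyEq {τ s : ℝ} (hτ : 1 < τ) (hs0 : 0 < s) (hs1 : s < 1) :
    (τ - 1) * (1 / Real.sqrt (1 + τ * (1 + τ) - ((τ - 1) * s + 1) ^ 2
        - τ * (1 + τ) / ((τ - 1) * s + 1))) = Real.sqrt (Gfun τ s) := by
  set y : ℝ := (τ - 1) * s + 1 with hy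
  have hy0 : 0 < y := by nlinarith
  have hτ0 : (0:ℝ) < τ - 1 := by linarith
  have hE : 1 + τ * (1 + τ) - y ^ 2 - τ * (1 + τ) / y
      = (τ - 1) ^ 2 * (s * (1 - s) * (y + τ + 1) / y) := by
    rw [hy]; field_simp; ring
  have h1s : 0 < 1 - s := by linarith
  have hXpos : 0 < s * (1 - s) * (y + τ + 1) / y := by
    have : 0 < y + τ + 1 := by linarith
    positivity
  rw [hE, Real.sqrt_mul (sq_nonneg _), Real.sqrt_sq hτ0.le]
  rw [show (τ - 1) * (1 / ((τ - 1) * Real.sqrt (s * (1 - s) * (y + τ + 1) / y)))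
      = (Real.sqrt (s * (1 - s) * (y + τ + 1) / y))⁻¹ by
    rw [one_div, mul_inv, ← mul_assoc, mul_inv_cancel₀ hτ0.ne', one_mul]]
  rw [← Real.sqrt_inv]
  congr 1
  rw [Gfun, hy]
  rw [inv_div]

-- pointwise limit
lemma keyLim {s : ℝ} (hs0 : 0 < s) (hs1 : s < 1) :
    Tendsto (fun τ : ℝ => Gfun τ s) atTop (𝓝 ((1 - s ^ 2)⁻¹)) := by
  have h1s : 0 < 1 - s := by linarith
  have hden : s * (1 - s) * (s + 1 + (2 - s) * 0) ≠ 0 := by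
    simp only [mul_zero, add_zero]
    have : 0 < s + 1 := by linarith
    positivity
  have hnum : Tendsto (fun τ : ℝ => s + (1 - s) * τ⁻¹) atTop (𝓝 (s + (1 - s) * 0)) :=
    tendsto_const_nhds.add (tendsto_const_nhds.mul tendsto_inv_atTop_zero)
  have hden' : Tendsto (fun τ : ℝ => s * (1 - s) * (s + 1 + (2 - s) * τ⁻¹)) atTop
      (𝓝 (s * (1 - s) * (s + 1 + (2 - s) * 0))) :=
    tendsto_const_nhds.mul (tendsto_const_nhds.add (tendsto_const_nhds.mul tendsto_inv_atTop_zero))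
  have h := hnum.div hden' hden
  have heq : ∀ᶠ τ : ℝ in atTop, (s + (1 - s) * τ⁻¹) / (s * (1 - s) * (s + 1 + (2 - s) * τ⁻¹))
      = Gfun τ s := by
    filter_upwards [eventually_gt_atTop (1:ℝ)] with τ hτ
    have hτ0 : τ ≠ 0 := by positivity
    have hd1 : s * (1 - s) * ((τ - 1) * s + 1 + τ + 1) ≠ 0 := by
      have h3 : 0 < (τ - 1) * s + 1 + τ + 1 := by nlinarith
      positivity
    have hd2 : s * (1 - s) * (s + 1 + (2 - s) * τ⁻¹) ≠ 0 := by
      have h2 : 0 < s + 1 + (2 - s) * τ⁻¹ := by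
        have : 0 < τ⁻¹ := by positivity
        nlinarith
      positivity
    rw [Gfun, div_eq_div_iff hd2 hd1]
    field_simp
    ring
  have hval : (s + (1 - s) * 0) / (s * (1 - s) * (s + 1 + (2 - s) * 0)) = (1 - s ^ 2)⁻¹ := by
    rw [mul_zero, add_zero, mul_zero, add_zero]
    have h2 : (1 : ℝ) - s ^ 2 ≠ 0 := by nlinarith
    field_simp
    ring
  rw [hval] at h
  exact (h.congr' heq)

lemma keyBound {τ s : ℝ} (hτ : 1 < τ) (hs0 : 0 < s) (hs1 : s < 1) :
    Real.sqrt (Gfun τ s) ≤ Real.sqrt 2 * ((Real.sqrt s)⁻¹ + (Real.sqrt (1 - s))⁻¹) := by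
  have h1s : 0 < 1 - s := by linarith
  have hsqrt2 : (0:ℝ) < Real.sqrt 2 := Real.sqrt_pos.2 (by norm_num)
  have hG : Gfun τ s ≤ (s * (1 - s))⁻¹ := by
    rw [Gfun, inv_eq_one_div]
    have hM : 0 < (τ - 1) * s + 1 + τ + 1 := by nlinarith
    have hden : 0 < s * (1 - s) * ((τ - 1) * s + 1 + τ + 1) := by positivity
    rw [div_le_div_iff₀ hden (by positivity)]
    nlinarith [mul_pos hs0 h1s]
  have step1 : Real.sqrt (Gfun τ s) ≤ (Real.sqrt s)⁻¹ * (Real.sqrt (1 - s))⁻¹ := by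
    have := Real.sqrt_le_sqrt hG
    rwa [Real.sqrt_inv, Real.sqrt_mul hs0.le, mul_inv] at this
  refine step1.trans ?_
  rcases le_total s (1/2) with h | h
  · have h2 : (Real.sqrt (1 - s))⁻¹ ≤ Real.sqrt 2 := by
      have hle : Real.sqrt (1/2) ≤ Real.sqrt (1 - s) := Real.sqrt_le_sqrt (by linarith)
      have := inv_anti₀ (Real.sqrt_pos.2 (by norm_num)) hle
      rwa [show (1:ℝ)/2 = 2⁻¹ by norm_num, Real.sqrt_inv, inv_inv] at this
    have h3 : (Real.sqrt s)⁻¹ * (Real.sqrt (1 - s))⁻¹ ≤ Real.sqrt 2 * (Real.sqrt s)⁻¹ := by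
      rw [mul_comm (Real.sqrt 2)]
      exact mul_le_mul_of_nonneg_left h2 (by positivity)
    refine h3.trans ?_
    have : (0:ℝ) ≤ (Real.sqrt (1 - s))⁻¹ := by positivity
    nlinarith
  · have h2 : (Real.sqrt s)⁻¹ ≤ Real.sqrt 2 := by
      have hle : Real.sqrt (1/2) ≤ Real.sqrt s := Real.sqrt_le_sqrt (by linarith)
      have := inv_anti₀ (Real.sqrt_pos.2 (by norm_num)) hle
      rwa [show (1:ℝ)/2 = 2⁻¹ by norm_num, Real.sqrt_inv, inv_inv] at this
    have h3 : (Real.sqrt s)⁻¹ * (Real.sqrt (1 - s))⁻¹ ≤ Real.sqrt 2 * (Real.sqrt (1 - s))⁻¹ :=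
      mul_le_mul_of_nonneg_right h2 (by positivity)
    refine h3.trans ?_
    have : (0:ℝ) ≤ (Real.sqrt s)⁻¹ := by positivity
    nlinarith

lemma ae_ne_one : ∀ᵐ s : ℝ ∂volume, s ≠ 1 := by
  refine ae_iff.2 ?_
  simpa using Real.volume_singleton

lemma substEq {τ : ℝ} (hτ : 1 < τ) :
    (∫ y in (1:ℝ)..τ, 1 / Real.sqrt (1 + τ * (1 + τ) - y ^ 2 - τ * (1 + τ) / y))
      = ∫ s in (0:ℝ)..1, Real.sqrt (Gfun τ s) := by
  have hc : τ - 1 ≠ 0 := by intro h; nlinarith [h]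
  have h := integral_comp_mul_add
    (a := (0:ℝ)) (b := 1) (c := τ - 1)
    (f := fun y => 1 / Real.sqrt (1 + τ * (1 + τ) - y ^ 2 - τ * (1 + τ) / y)) hc 1
  rw [show (τ-1) * 0 + 1 = (1:ℝ) by ring, show (τ-1) * 1 + 1 = τ by ring] at h
  have h2 : (∫ y in (1:ℝ)..τ, 1 / Real.sqrt (1 + τ * (1 + τ) - y ^ 2 - τ * (1 + τ) / y))
      = (τ - 1) • ∫ s in (0:ℝ)..1,
          1 / Real.sqrt (1 + τ * (1 + τ) - ((τ - 1) * s + 1) ^ 2 - τ * (1 + τ) / ((τ - 1) * s + 1)) := by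
    rw [h, smul_smul, mul_inv_cancel₀ hc, one_smul]
  rw [h2, ← intervalIntegral.integral_smul]
  refine intervalIntegral.integral_congr_ae ?_
  filter_upwards [ae_ne_one] with s hs hmem
  rw [uIoc_of_le (by norm_num : (0:ℝ) ≤ 1)] at hmem
  have hs1 : s < 1 := lt_of_le_of_ne hmem.2 hs
  rw [smul_eq_mul]
  exact keyEq hτ hmem.1 hs1
/-- The half-period `L(τ) = (1/A)∫₁^τ dy/√(1 + τ(1+τ) - y² - τ(1+τ)/y)` tends to
`π/(2A)` as `τ → +∞`. -/
theorem stmt9 (A : ℝ) (hA : 0 < A) :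
    Tendsto (fun τ : ℝ =>
        (1 / A) * ∫ y in (1 : ℝ)..τ,
          1 / Real.sqrt (1 + τ * (1 + τ) - y ^ 2 - τ * (1 + τ) / y))
      atTop (nhds (π / (2 * A))) := by
  have hbound : IntervalIntegrable
      (fun s : ℝ => Real.sqrt 2 * ((Real.sqrt s)⁻¹ + (Real.sqrt (1 - s))⁻¹)) volume 0 1 :=
    (sqrtInvInt.add sqrtInvInt2).const_mul _
  have hF_meas : ∀ᶠ τ : ℝ in atTop, AEStronglyMeasurable
      (fun s => Real.sqrt (Gfun τ s)) (volume.restrict (Set.uIoc (0:ℝ) 1)) := by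
    refine Eventually.of_forall fun τ => Measurable.aestronglyMeasurable ?_
    unfold Gfun; fun_prop
  have h_bound : ∀ᶠ τ : ℝ in atTop, ∀ᵐ s : ℝ ∂volume, s ∈ Set.uIoc (0:ℝ) 1 →
      ‖Real.sqrt (Gfun τ s)‖ ≤ Real.sqrt 2 * ((Real.sqrt s)⁻¹ + (Real.sqrt (1 - s))⁻¹) := by
    filter_upwards [eventually_gt_atTop (1:ℝ)] with τ hτ
    filter_upwards [ae_ne_one] with s hs hmem
    rw [uIoc_of_le (by norm_num : (0:ℝ) ≤ 1)] at hmem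
    rw [Real.norm_eq_abs, abs_of_nonneg (Real.sqrt_nonneg _)]
    exact keyBound hτ hmem.1 (lt_of_le_of_ne hmem.2 hs)
  have h_lim : ∀ᵐ s : ℝ ∂volume, s ∈ Set.uIoc (0:ℝ) 1 →
      Tendsto (fun τ : ℝ => Real.sqrt (Gfun τ s)) atTop (𝓝 ((Real.sqrt (1 - s ^ 2))⁻¹)) := by
    filter_upwards [ae_ne_one] with s hs hmem
    rw [uIoc_of_le (by norm_num : (0:ℝ) ≤ 1)] at hmem
    have h := (Real.continuous_sqrt.tendsto _).comp
      (keyLim hmem.1 (lt_of_le_of_ne hmem.2 hs))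
    rw [Real.sqrt_inv] at h
    exact h
  have hdct := intervalIntegral.tendsto_integral_filter_of_dominated_convergence
    (μ := volume) (a := (0:ℝ)) (b := 1)
    (F := fun (τ : ℝ) s => Real.sqrt (Gfun τ s))
    (f := fun s : ℝ => (Real.sqrt (1 - s ^ 2))⁻¹)
    (bound := fun s : ℝ => Real.sqrt 2 * ((Real.sqrt s)⁻¹ + (Real.sqrt (1 - s))⁻¹))
    hF_meas h_bound hbound h_lim
  rw [arcsinInt] at hdct
  have hmain : Tendsto (fun τ : ℝ => ∫ y in (1:ℝ)..τ,
      1 / Real.sqrt (1 + τ * (1 + τ) - y ^ 2 - τ * (1 + τ) / y)) atTop (𝓝 (π / 2)) := by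
    refine hdct.congr' ?_
    filter_upwards [eventually_gt_atTop (1:ℝ)] with τ hτ
    exact (substEq hτ).symm
  have hfin := hmain.const_mul (1 / A)
  rw [show (1 / A) * (π / 2) = π / (2 * A) by rw [div_mul_div_comm, one_mul, mul_comm A 2]] at hfin
  exact hfin
end

section
/- (Key integral-decay lemma) Let Z : (t₀, +∞) → [0, ∞) be measurable with Z ∈ L²((t₀,+∞)), and let ζ ∈ (0, 1/2). If there exist constants C > 0 and T₀ ≥ t₀ such that ∫_t^{+∞} Z(s)² ds ≤ C·Z(t)^{1/(1-ζ)} for almost every t ≥ T₀, then Z ∈ L¹((T₀, +∞)). -/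
open Set MeasureTheory

set_option maxHeartbeats 1000000 in
/-- Key integral-decay lemma: if `Z ≥ 0` is square integrable on `(t₀,∞)` and
`∫_t^∞ Z² ≤ C Z(t)^{1/(1-ζ)}` for a.e. `t ≥ T₀`, with `ζ ∈ (0,1/2)`,
then `Z ∈ L¹((T₀,∞))`. -/
theorem stmt13 (t₀ : ℝ) (Z : ℝ → ℝ) (hZm : Measurable Z)
    (hZnn : ∀ t ∈ Ioi t₀, 0 ≤ Z t)
    (hZL2 : IntegrableOn (fun t => Z t ^ 2) (Ioi t₀))
    (ζ : ℝ) (hζ : ζ ∈ Ioo (0 : ℝ) (1 / 2))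
    (C T₀ : ℝ) (hC : 0 < C) (hT₀ : t₀ ≤ T₀)
    (hkey : ∀ᵐ t ∂(volume.restrict (Ioi T₀)),
      (∫ s in Ioi t, Z s ^ 2) ≤ C * Z t ^ ((1 : ℝ) / (1 - ζ))) :
    IntegrableOn Z (Ioi T₀) := by
  obtain ⟨hζ0, hζ2⟩ := hζ
  set p : ℝ := 2 * (1 - ζ) with hp_def
  have hp1 : 1 < p := by simp only [hp_def]; linarith
  have hp2 : p < 2 := by simp only [hp_def]; linarith
  have hp0 : 0 < p := by linarith
  have hpm1 : 0 < p - 1 := by linarith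
  have hζ1 : (1 : ℝ) - ζ ≠ 0 := by linarith
  set Y : ℝ → ℝ := fun t => ∫ s in Ioi t, Z s ^ 2 with hY_def
  -- basic facts about Y
  have hYnn : ∀ t : ℝ, 0 ≤ Y t := fun t =>
    setIntegral_nonneg measurableSet_Ioi fun s _ => sq_nonneg _
  have hZ2int : ∀ t : ℝ, t₀ ≤ t → IntegrableOn (fun s => Z s ^ 2) (Ioi t) :=
    fun t ht => hZL2.mono_set (Ioi_subset_Ioi ht)
  have hZ2intIoc : ∀ a b : ℝ, t₀ ≤ a → IntegrableOn (fun s => Z s ^ 2) (Ioc a b) :=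
    fun a b ha => hZL2.mono_set (fun x hx => lt_of_le_of_lt ha hx.1)
  have hYsplit : ∀ a b : ℝ, t₀ ≤ a → a ≤ b →
      Y a = (∫ s in Ioc a b, Z s ^ 2) + Y b := by
    intro a b ha hab
    have := setIntegral_union (f := fun s => Z s ^ 2) (μ := volume)
      (Ioc_disjoint_Ioi le_rfl) measurableSet_Ioi
      (hZ2intIoc a b ha) (hZ2int b (ha.trans hab))
    rw [hY_def]
    simp only [Ioc_union_Ioi_eq_Ioi hab] at this
    exact this
  have hYanti : ∀ a b : ℝ, t₀ ≤ a → a ≤ b → Y b ≤ Y a := by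
    intro a b ha hab
    rw [hYsplit a b ha hab]
    have : 0 ≤ ∫ s in Ioc a b, Z s ^ 2 :=
      setIntegral_nonneg measurableSet_Ioc fun s _ => sq_nonneg _
    linarith
  -- pointwise key inequality in power form
  have hkey2 : ∀ᵐ s ∂(volume.restrict (Ioi T₀)), (Y s / C) ^ p ≤ Z s ^ 2 := by
    filter_upwards [hkey, ae_restrict_mem measurableSet_Ioi] with s h1 hs
    have hZs : 0 ≤ Z s := hZnn s (lt_of_le_of_lt hT₀ hs)
    have h2 : Y s / C ≤ Z s ^ ((1 : ℝ) / (1 - ζ)) := by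
      rw [div_le_iff₀ hC]; rw [mul_comm]; exact h1
    have h3 : (Y s / C) ^ p ≤ (Z s ^ ((1 : ℝ) / (1 - ζ))) ^ p :=
      Real.rpow_le_rpow (by positivity) h2 hp0.le
    calc (Y s / C) ^ p ≤ (Z s ^ ((1 : ℝ) / (1 - ζ))) ^ p := h3
      _ = Z s ^ (((1 : ℝ) / (1 - ζ)) * p) := (Real.rpow_mul hZs _ _).symm
      _ = Z s ^ (2 : ℝ) := by
          congr 1
          rw [hp_def]
          field_simp
      _ = Z s ^ 2 := Real.rpow_two _
  -- Lemma A
  have lemA : ∀ a b : ℝ, T₀ ≤ a → a < b → (b - a) * (Y b / C) ^ p ≤ Y a := by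
    intro a b ha hab
    have ht₀a : t₀ ≤ a := hT₀.trans ha
    have hsub : Ioc a b ⊆ Ioi T₀ := fun x hx => lt_of_le_of_lt ha hx.1
    have hae : ∀ᵐ s ∂(volume.restrict (Ioc a b)), (Y b / C) ^ p ≤ Z s ^ 2 := by
      filter_upwards [ae_restrict_of_ae_restrict_of_subset hsub hkey2,
        ae_restrict_mem measurableSet_Ioc] with s h1 hs
      refine le_trans ?_ h1
      refine Real.rpow_le_rpow (by positivity) ?_ hp0.le
      exact div_le_div_of_nonneg_right (hYanti s b (ht₀a.trans hs.1.le) hs.2) hC.le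
    have h4 : (∫ _ in Ioc a b, (Y b / C) ^ p) ≤ ∫ s in Ioc a b, Z s ^ 2 := by
      refine setIntegral_mono_ae_restrict (integrableOn_const ?_)
        (hZ2intIoc a b ht₀a) hae
      rw [Real.volume_Ioc]; exact ENNReal.ofReal_ne_top
    have h5 : (∫ _ in Ioc a b, (Y b / C) ^ p) = (b - a) * (Y b / C) ^ p := by
      rw [setIntegral_const, measureReal_def, Real.volume_Ioc, ENNReal.toReal_ofReal (by linarith),
        smul_eq_mul]
    have h6 : (∫ s in Ioc a b, Z s ^ 2) ≤ Y a := by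
      rw [hYsplit a b ht₀a hab.le]; linarith [hYnn b]
    linarith [h4, h6, h5.symm.le]
  -- Lemma B : recursion
  have lemB : ∀ a b : ℝ, T₀ ≤ a → a < b → Y b ≤ C * (Y a / (b - a)) ^ ((1:ℝ) / p) := by
    intro a b ha hab
    have hba : 0 < b - a := by linarith
    have h1 : (Y b / C) ^ p ≤ Y a / (b - a) := by
      rw [le_div_iff₀ hba, mul_comm]; exact lemA a b ha hab
    have h2 : ((Y b / C) ^ p) ^ ((1:ℝ)/p) ≤ (Y a / (b - a)) ^ ((1:ℝ)/p) :=
      Real.rpow_le_rpow (Real.rpow_nonneg (by positivity) _) h1 (by positivity)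
    have h3 : ((Y b / C) ^ p) ^ ((1:ℝ)/p) = Y b / C := by
      rw [← Real.rpow_mul (by positivity), mul_one_div, div_self hp0.ne', Real.rpow_one]
    rw [h3] at h2
    rw [← div_le_iff₀' hC]
    exact h2
  -- dyadic setup
  set T₁ : ℝ := max T₀ 1 with hT₁_def
  have hT₁T₀ : T₀ ≤ T₁ := le_max_left _ _
  have hT₁1 : (1:ℝ) ≤ T₁ := le_max_right _ _
  have hT₁0 : (0:ℝ) < T₁ := by linarith
  set R : ℝ := (2:ℝ) ^ ((p - 1)⁻¹ : ℝ) with hR_def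
  have hR0 : 0 < R := Real.rpow_pos_of_pos two_pos _
  have hβ1 : 1 < (p - 1)⁻¹ := by
    rw [lt_inv_comm₀ one_pos hpm1]; linarith
  have hR2 : 2 < R := by
    calc (2:ℝ) = (2:ℝ) ^ (1:ℝ) := (Real.rpow_one 2).symm
      _ < R := Real.rpow_lt_rpow_of_exponent_lt one_lt_two hβ1
  have h2R_id : ((2 * R : ℝ)) ^ ((1:ℝ)/p) = R := by
    have h2R : (2 * R : ℝ) = (2:ℝ) ^ (1 + (p-1)⁻¹ : ℝ) := by
      rw [Real.rpow_add two_pos, Real.rpow_one, hR_def]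
    rw [h2R, ← Real.rpow_mul (by norm_num : (0:ℝ) ≤ 2), hR_def]
    congr 1
    field_simp
    try ring
  set M : ℝ := max (Y T₁) ((C * R) ^ (p / (p - 1)) : ℝ) with hM_def
  have hCR0 : 0 < C * R := mul_pos hC hR0
  have hM0 : 0 < M := lt_max_of_lt_right (Real.rpow_pos_of_pos hCR0 _)
  have hM1 : C * R ≤ M ^ (1 - 1/p : ℝ) := by
    have h1 : ((C * R) ^ (p / (p - 1)) : ℝ) ^ (1 - 1/p : ℝ) = C * R := by
      rw [← Real.rpow_mul hCR0.le]
      have : p / (p - 1) * (1 - 1/p) = 1 := by field_simp; try ring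
      rw [this, Real.rpow_one]
    calc C * R = ((C * R) ^ (p / (p - 1)) : ℝ) ^ (1 - 1/p : ℝ) := h1.symm
      _ ≤ M ^ (1 - 1/p : ℝ) := by
          refine Real.rpow_le_rpow (Real.rpow_nonneg hCR0.le _) (le_max_right _ _) ?_
          have : 1/p < 1 := by rw [div_lt_one hp0]; exact hp1
          linarith
  -- decay of Y along dyadic points
  have hdecay : ∀ k : ℕ, Y (T₁ * 2 ^ k) ≤ M / R ^ k := by
    intro k
    induction k with
    | zero =>
      simp only [pow_zero, mul_one, div_one]
      exact le_max_left _ _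
    | succ k ih =>
      have hak : T₀ ≤ T₁ * 2 ^ k := by
        calc T₀ ≤ T₁ := hT₁T₀
          _ = T₁ * 1 := (mul_one _).symm
          _ ≤ T₁ * 2 ^ k := by
              refine mul_le_mul_of_nonneg_left ?_ hT₁0.le
              exact one_le_pow₀ one_le_two
      have hlt : T₁ * 2 ^ k < T₁ * 2 ^ (k+1) := by
        refine mul_lt_mul_of_pos_left ?_ hT₁0
        exact pow_lt_pow_right₀ one_lt_two (Nat.lt_succ_self k)
      have hrec := lemB (T₁ * 2 ^ k) (T₁ * 2 ^ (k+1)) hak hlt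
      have hdiff : T₁ * 2 ^ (k+1) - T₁ * 2 ^ k = T₁ * 2 ^ k := by ring
      rw [hdiff] at hrec
      have h2k : (0:ℝ) < 2 ^ k := by positivity
      have hYk := hYnn (T₁ * 2 ^ k)
      have h1 : Y (T₁ * 2 ^ k) / (T₁ * 2 ^ k) ≤ M / (2 * R) ^ k := by
        calc Y (T₁ * 2 ^ k) / (T₁ * 2 ^ k) ≤ Y (T₁ * 2 ^ k) / (1 * 2 ^ k) := by
              refine div_le_div_of_nonneg_left hYk (by positivity) ?_
              exact mul_le_mul_of_nonneg_right hT₁1 h2k.le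
          _ = Y (T₁ * 2 ^ k) / 2 ^ k := by rw [one_mul]
          _ ≤ (M / R ^ k) / 2 ^ k := div_le_div_of_nonneg_right ih h2k.le
          _ = M / (2 * R) ^ k := by rw [mul_pow]; ring
      have h2 : (Y (T₁ * 2 ^ k) / (T₁ * 2 ^ k)) ^ ((1:ℝ)/p)
          ≤ (M / (2 * R) ^ k) ^ ((1:ℝ)/p) :=
        Real.rpow_le_rpow (by positivity) h1 (by positivity)
      have h3 : (M / (2 * R) ^ k : ℝ) ^ ((1:ℝ)/p) = M ^ ((1:ℝ)/p) / R ^ k := by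
        rw [Real.div_rpow hM0.le (by positivity)]
        congr 1
        rw [← Real.rpow_natCast (2 * R) k, ← Real.rpow_natCast R k,
          ← Real.rpow_mul (by positivity), mul_comm (k:ℝ) ((1:ℝ)/p),
          Real.rpow_mul (by positivity), h2R_id]
      have h4 : C * (M ^ ((1:ℝ)/p) / R ^ k) ≤ M / R ^ (k+1) := by
        rw [mul_div_assoc', div_le_div_iff₀ (by positivity) (by positivity : (0:ℝ) < R ^ (k+1))]
        have hMid : M ^ (1 - 1/p : ℝ) * M ^ ((1:ℝ)/p) = M := by
          rw [← Real.rpow_add hM0]; norm_num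
        calc C * M ^ ((1:ℝ)/p) * R ^ (k+1) = (C * R) * M ^ ((1:ℝ)/p) * R ^ k := by ring
          _ ≤ M ^ (1 - 1/p : ℝ) * M ^ ((1:ℝ)/p) * R ^ k := by
              refine mul_le_mul_of_nonneg_right ?_ (by positivity)
              exact mul_le_mul_of_nonneg_right hM1 (Real.rpow_nonneg hM0.le _)
          _ = M * R ^ k := by rw [hMid]
        -- goal closed by calc
      calc Y (T₁ * 2 ^ (k+1)) ≤ C * (Y (T₁ * 2 ^ k) / (T₁ * 2 ^ k)) ^ ((1:ℝ)/p) := hrec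
        _ ≤ C * (M / (2 * R) ^ k) ^ ((1:ℝ)/p) := by
            exact mul_le_mul_of_nonneg_left h2 hC.le
        _ = C * (M ^ ((1:ℝ)/p) / R ^ k) := by rw [h3]
        _ ≤ M / R ^ (k+1) := h4
  -- integrability of Z on finite intervals to the right of t₀
  have hZInt : ∀ a b : ℝ, t₀ ≤ a → IntegrableOn Z (Ioc a b) := by
    intro a b ha
    have hg : IntegrableOn (fun s => 1 + Z s ^ 2) (Ioc a b) := by
      refine Integrable.add (integrableOn_const ?_) (hZ2intIoc a b ha)
      rw [Real.volume_Ioc]; exact ENNReal.ofReal_ne_top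
    refine Integrable.mono' hg (hZm.aestronglyMeasurable.restrict) ?_
    refine Filter.Eventually.of_forall fun s => ?_
    have := sq_abs (Z s)
    have h1 : |Z s| ≤ 1 + Z s ^ 2 := by nlinarith [sq_nonneg (|Z s| - 1), abs_nonneg (Z s)]
    simpa using h1
  -- geometric block parameters
  set G : ℝ := Real.sqrt (2 * R) with hG_def
  have hG0 : 0 < G := Real.sqrt_pos.2 (by linarith)
  have hG2 : 2 < G := by
    rw [hG_def, Real.lt_sqrt (by norm_num : (0:ℝ) ≤ 2)]
    nlinarith
  have hGR : G < R := by
    rw [hG_def, Real.sqrt_lt' hR0]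
    nlinarith
  -- block integral bound
  have hblock : ∀ k : ℕ, (∫ s in Ioc (T₁ * 2 ^ k) (T₁ * 2 ^ (k+1)), Z s)
      ≤ T₁ * (2/G) ^ k + M * (G/R) ^ k := by
    intro k
    have hak : t₀ ≤ T₁ * 2 ^ k := by
      calc t₀ ≤ T₁ := hT₀.trans hT₁T₀
        _ = T₁ * 1 := (mul_one _).symm
        _ ≤ T₁ * 2 ^ k := by
            exact mul_le_mul_of_nonneg_left (one_le_pow₀ one_le_two) hT₁0.le
    have hGk : (0:ℝ) < G ^ k := by positivity
    have hgint : IntegrableOn (fun s => (G ^ k)⁻¹ + Z s ^ 2 * G ^ k)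
        (Ioc (T₁ * 2 ^ k) (T₁ * 2 ^ (k+1))) := by
      refine Integrable.add (integrableOn_const ?_)
        ((hZ2intIoc _ _ hak).mul_const _)
      rw [Real.volume_Ioc]; exact ENNReal.ofReal_ne_top
    have hmono : (∫ s in Ioc (T₁ * 2 ^ k) (T₁ * 2 ^ (k+1)), Z s)
        ≤ ∫ s in Ioc (T₁ * 2 ^ k) (T₁ * 2 ^ (k+1)), ((G ^ k)⁻¹ + Z s ^ 2 * G ^ k) := by
      refine setIntegral_mono_on (hZInt _ _ hak) hgint measurableSet_Ioc ?_
      intro s hs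
      have hZs : 0 ≤ Z s := hZnn s (lt_of_le_of_lt hak hs.1)
      have h1 : Z s * G ^ k ≤ 1 + (Z s * G ^ k) ^ 2 := by
        nlinarith [sq_nonneg (Z s * G ^ k - 1), mul_nonneg hZs hGk.le]
      have key : Z s * G ^ k * (G ^ k)⁻¹ ≤ (1 + (Z s * G ^ k) ^ 2) * (G ^ k)⁻¹ :=
        mul_le_mul_of_nonneg_right h1 (inv_nonneg.2 hGk.le)
      have e1 : Z s * G ^ k * (G ^ k)⁻¹ = Z s := by
        rw [mul_assoc, mul_inv_cancel₀ hGk.ne', mul_one]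
      have e2 : (1 + (Z s * G ^ k) ^ 2) * (G ^ k)⁻¹
          = (G ^ k)⁻¹ + Z s ^ 2 * G ^ k * (G ^ k * (G ^ k)⁻¹) := by ring
      rw [e1, e2, mul_inv_cancel₀ hGk.ne', mul_one] at key
      exact key
    have hsplit : (∫ s in Ioc (T₁ * 2 ^ k) (T₁ * 2 ^ (k+1)),
          ((G ^ k)⁻¹ + Z s ^ 2 * G ^ k))
        = (T₁ * 2 ^ k) * (G ^ k)⁻¹
          + (∫ s in Ioc (T₁ * 2 ^ k) (T₁ * 2 ^ (k+1)), Z s ^ 2) * G ^ k := by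
      have hmeas : T₁ * 2 ^ (k+1) - T₁ * 2 ^ k = T₁ * 2 ^ k := by ring
      rw [integral_add (integrableOn_const (C := (G ^ k)⁻¹) (μ := volume)
          (s := Ioc (T₁ * 2 ^ k) (T₁ * 2 ^ (k+1))) (by
          rw [Real.volume_Ioc]; exact ENNReal.ofReal_ne_top))
        ((hZ2intIoc _ _ hak).mul_const _), integral_mul_const,
        setIntegral_const, measureReal_def, Real.volume_Ioc, smul_eq_mul, hmeas,
        ENNReal.toReal_ofReal (by positivity : (0:ℝ) ≤ T₁ * 2 ^ k)]
    have hZ2bound : (∫ s in Ioc (T₁ * 2 ^ k) (T₁ * 2 ^ (k+1)), Z s ^ 2) ≤ M / R ^ k := by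
      have hle : T₁ * 2 ^ k ≤ T₁ * 2 ^ (k+1) := by
        refine mul_le_mul_of_nonneg_left ?_ hT₁0.le
        exact pow_le_pow_right₀ one_le_two (Nat.le_succ k)
      have := hYsplit (T₁ * 2 ^ k) (T₁ * 2 ^ (k+1)) hak hle
      have hY2 := hYnn (T₁ * 2 ^ (k+1))
      have := hdecay k
      linarith [hdecay k, hYnn (T₁ * 2 ^ (k+1)),
        (hYsplit (T₁ * 2 ^ k) (T₁ * 2 ^ (k+1)) hak hle).symm.le]
    calc (∫ s in Ioc (T₁ * 2 ^ k) (T₁ * 2 ^ (k+1)), Z s)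
        ≤ (T₁ * 2 ^ k) * (G ^ k)⁻¹
          + (∫ s in Ioc (T₁ * 2 ^ k) (T₁ * 2 ^ (k+1)), Z s ^ 2) * G ^ k := by
          rw [← hsplit]; exact hmono
      _ ≤ (T₁ * 2 ^ k) * (G ^ k)⁻¹ + (M / R ^ k) * G ^ k := by
          refine add_le_add_right (mul_le_mul_of_nonneg_right hZ2bound hGk.le) _
      _ = T₁ * (2/G) ^ k + M * (G/R) ^ k := by
          simp only [div_pow, div_eq_mul_inv]
          ring
  -- partial sums bound
  set B : ℝ := T₁ * (1 - 2/G)⁻¹ + M * (1 - G/R)⁻¹ with hB_def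
  have hr1 : (0:ℝ) ≤ 2/G ∧ 2/G < 1 := by
    constructor
    · positivity
    · rw [div_lt_one hG0]; exact hG2
  have hr2 : (0:ℝ) ≤ G/R ∧ G/R < 1 := by
    constructor
    · positivity
    · rw [div_lt_one hR0]; exact hGR
  have hgeom : ∀ (r : ℝ), 0 ≤ r → r < 1 → ∀ n : ℕ,
      (∑ k ∈ Finset.range n, r ^ k) ≤ (1 - r)⁻¹ := by
    intro r h0 h1 n
    have := Summable.sum_le_tsum (Finset.range n) (fun i _ => pow_nonneg h0 i)
      (summable_geometric_of_lt_one h0 h1)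
    rwa [tsum_geometric_of_lt_one h0 h1] at this
  have hpartial : ∀ n : ℕ, (∫ s in Ioc T₁ (T₁ * 2 ^ n), Z s) ≤ B := by
    intro n
    have hsum : (∫ s in Ioc T₁ (T₁ * 2 ^ n), Z s)
        ≤ ∑ k ∈ Finset.range n, (T₁ * (2/G) ^ k + M * (G/R) ^ k) := by
      induction n with
      | zero =>
        simp
      | succ n ih =>
        have hle1 : T₁ ≤ T₁ * 2 ^ n :=
          le_mul_of_one_le_right hT₁0.le (one_le_pow₀ one_le_two)
        have hle2 : T₁ * 2 ^ n ≤ T₁ * 2 ^ (n+1) := by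
          refine mul_le_mul_of_nonneg_left ?_ hT₁0.le
          exact pow_le_pow_right₀ one_le_two (Nat.le_succ n)
        have hunion : Ioc T₁ (T₁ * 2 ^ n) ∪ Ioc (T₁ * 2 ^ n) (T₁ * 2 ^ (n+1))
            = Ioc T₁ (T₁ * 2 ^ (n+1)) := Ioc_union_Ioc_eq_Ioc hle1 hle2
        have hdisj : Disjoint (Ioc T₁ (T₁ * 2 ^ n)) (Ioc (T₁ * 2 ^ n) (T₁ * 2 ^ (n+1))) :=
          Set.Ioc_disjoint_Ioc_of_le le_rfl
        have ht₀T₁ : t₀ ≤ T₁ := hT₀.trans hT₁T₀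
        have hak : t₀ ≤ T₁ * 2 ^ n := ht₀T₁.trans hle1
        have := setIntegral_union (f := Z) (μ := volume) hdisj measurableSet_Ioc
          (hZInt T₁ (T₁ * 2 ^ n) ht₀T₁) (hZInt (T₁ * 2 ^ n) (T₁ * 2 ^ (n+1)) hak)
        rw [hunion] at this
        rw [this, Finset.sum_range_succ]
        exact add_le_add ih (hblock n)
    refine hsum.trans ?_
    rw [hB_def]
    have hsum2 : ∑ k ∈ Finset.range n, (T₁ * (2/G) ^ k + M * (G/R) ^ k)
        = T₁ * (∑ k ∈ Finset.range n, (2/G) ^ k) + M * (∑ k ∈ Finset.range n, (G/R) ^ k) := by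
      rw [Finset.sum_add_distrib, Finset.mul_sum, Finset.mul_sum]
    rw [hsum2]
    refine add_le_add ?_ ?_
    · exact mul_le_mul_of_nonneg_left (hgeom _ hr1.1 hr1.2 n) hT₁0.le
    · exact mul_le_mul_of_nonneg_left (hgeom _ hr2.1 hr2.2 n) hM0.le
  -- integrability on (T₁, ∞)
  have hIoi : IntegrableOn Z (Ioi T₁) := by
    refine integrableOn_Ioi_of_intervalIntegral_norm_bounded (b := fun n : ℕ => T₁ * 2 ^ n)
      (l := Filter.atTop) B T₁ (fun n => hZInt T₁ _ (hT₀.trans hT₁T₀)) ?_ ?_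
    · exact (tendsto_pow_atTop_atTop_of_one_lt one_lt_two).const_mul_atTop hT₁0
    · refine Filter.Eventually.of_forall fun n => ?_
      have hle1 : T₁ ≤ T₁ * 2 ^ n :=
        le_mul_of_one_le_right hT₁0.le (one_le_pow₀ one_le_two)
      rw [intervalIntegral.integral_of_le hle1]
      have hcongr : (∫ s in Ioc T₁ (T₁ * 2 ^ n), ‖Z s‖)
          = ∫ s in Ioc T₁ (T₁ * 2 ^ n), Z s := by
        refine setIntegral_congr_fun measurableSet_Ioc fun s hs => ?_
        exact Real.norm_of_nonneg (hZnn s (lt_of_le_of_lt (hT₀.trans hT₁T₀) hs.1))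
      rw [hcongr]
      exact hpartial n
  -- conclusion
  have hIoc : IntegrableOn Z (Ioc T₀ T₁) := hZInt T₀ T₁ hT₀
  have : Ioi T₀ = Ioc T₀ T₁ ∪ Ioi T₁ := (Ioc_union_Ioi_eq_Ioi hT₁T₀).symm
  rw [this]
  exact hIoc.union hIoi
end

section
/- Suppose H : [T₁, ∞) → ℝ is differentiable, H ≥ H_∞, and satisfies H'(t) + C₁(H(t) - H_∞)^{2(1-θ)} ≤ C₂ e^{-2βt} for all t > T₁, where C₁, C₂, β > 0 and θ ∈ (0, 1/2). Then there exists C > 0 such that H(t) - H_∞ ≤ C(1+t)^{-1/(1-2θ)} for all sufficiently large t. -/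
open Real Filter Set Topology

/-- If `H' + C₁(H - H_∞)^{2(1-θ)} ≤ C₂ e^{-2βt}` for `t > T₁`, with `H ≥ H_∞` and
`θ ∈ (0,1/2)`, then `H(t) - H_∞ ≤ C(1+t)^{-1/(1-2θ)}` for large `t`. -/
theorem stmt14 (H : ℝ → ℝ) (Hinf T₁ C₁ C₂ β θ : ℝ)
    (hC₁ : 0 < C₁) (hC₂ : 0 < C₂) (hβ : 0 < β) (hθ : θ ∈ Set.Ioo (0 : ℝ) (1 / 2))
    (hdiff : ∀ t > T₁, DifferentiableAt ℝ H t)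
    (hge : ∀ t ≥ T₁, Hinf ≤ H t)
    (hineq : ∀ t > T₁,
      deriv H t + C₁ * (H t - Hinf) ^ (2 * (1 - θ)) ≤ C₂ * Real.exp (-2 * β * t)) :
    ∃ C > 0, ∃ T : ℝ, ∀ t ≥ T,
      H t - Hinf ≤ C * (1 + t) ^ (-(1 / (1 - 2 * θ))) := by
  obtain ⟨hθ0, hθ2⟩ := hθ
  set p : ℝ := 2 * (1 - θ) with hp_def
  set α : ℝ := 1 / (1 - 2 * θ) with hα_def
  have h2θ : 0 < 1 - 2 * θ := by linarith
  have hα : 0 < α := by positivity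
  have hp1 : 1 < p := by rw [hp_def]; linarith
  have hαp : α * p = α + 1 := by
    rw [hα_def, hp_def]; field_simp; ring
  -- choose T
  have htend : Tendsto (fun t : ℝ => C₂ * Real.exp (-2 * β * t) * (1 + t) ^ (α + 1))
      atTop (𝓝 0) := by
    have h1 : Tendsto (fun x : ℝ => x ^ (α + 1) * Real.exp (-(2 * β) * x)) atTop (𝓝 0) :=
      tendsto_rpow_mul_exp_neg_mul_atTop_nhds_zero (α + 1) (2 * β) (by linarith)
    have h2 : Tendsto (fun t : ℝ => (1 + t)) atTop atTop :=
      tendsto_atTop_add_const_left _ _ tendsto_id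
    have h3 := (h1.comp h2).const_mul (C₂ * Real.exp (2 * β))
    rw [mul_zero] at h3
    refine h3.congr (fun t => ?_)
    simp only [Function.comp]
    rw [show -2 * β * t = 2 * β + -(2 * β) * (1 + t) by ring, Real.exp_add]
    ring
  obtain ⟨T₀, hT₀⟩ := (eventually_atTop.mp (htend.eventually (gt_mem_nhds one_pos)))
  set T : ℝ := max T₀ (max T₁ 0) + 1 with hT_def
  have hTT₁ : T₁ < T := by
    have : T₁ ≤ max T₀ (max T₁ 0) := le_trans (le_max_left _ _) (le_max_right _ _)
    linarith
  have hT0 : (0 : ℝ) < T := by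
    have : (0 : ℝ) ≤ max T₀ (max T₁ 0) := le_trans (le_max_right _ _) (le_max_right _ _)
    linarith
  have hTexp : ∀ t ≥ T, C₂ * Real.exp (-2 * β * t) ≤ (1 + t) ^ (-(α + 1)) := by
    intro t ht
    have ht0 : (0 : ℝ) < 1 + t := by linarith
    have hF : C₂ * Real.exp (-2 * β * t) * (1 + t) ^ (α + 1) < 1 :=
      hT₀ t (by rw [hT_def] at ht; linarith [le_max_left T₀ (max T₁ 0)])
    have hpow : (0 : ℝ) < (1 + t) ^ (α + 1) := Real.rpow_pos_of_pos ht0 _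
    rw [Real.rpow_neg ht0.le, inv_eq_one_div, le_div_iff₀ hpow]
    exact hF.le
  -- choose A
  obtain ⟨A₀, hA₀⟩ := eventually_atTop.mp
    ((tendsto_rpow_atTop (y := p - 1) (by linarith)).eventually_ge_atTop ((α + 2) / C₁))
  set A : ℝ := max A₀ (max 1 ((H T - Hinf) * (1 + T) ^ α)) with hA_def
  have hA1 : (1 : ℝ) ≤ A := le_trans (le_max_left _ _) (le_max_right _ _)
  have hApos : (0 : ℝ) < A := lt_of_lt_of_le one_pos hA1
  have hApow : (α + 2) / C₁ ≤ A ^ (p - 1) := hA₀ A (le_max_left _ _)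
  have hCAp : α * A + 2 ≤ C₁ * A ^ p := by
    have h1 : (α + 2) * A ≤ C₁ * A ^ (p - 1) * A := by
      have := (div_le_iff₀ hC₁).mp hApow
      nlinarith
    have h2 : A ^ (p - 1) * A = A ^ p := by
      rw [← Real.rpow_add_one hApos.ne' (p - 1), sub_add_cancel]
    nlinarith [h2]
  have hAinit : H T - Hinf ≤ A * (1 + T) ^ (-α) := by
    have hT1 : (0 : ℝ) < 1 + T := by linarith
    have h1 : (H T - Hinf) * (1 + T) ^ α ≤ A := le_trans (le_max_right _ _) (le_max_right _ _)
    have h2 := mul_le_mul_of_nonneg_right h1 (Real.rpow_pos_of_pos hT1 (-α)).le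
    calc H T - Hinf = (H T - Hinf) * (1 + T) ^ α * (1 + T) ^ (-α) := by
          rw [mul_assoc, ← Real.rpow_add hT1, add_neg_cancel, Real.rpow_zero, mul_one]
      _ ≤ A * (1 + T) ^ (-α) := h2
  clear hp_def hα_def hT_def hA_def
  clear_value p α T A
  -- main comparison
  refine ⟨A, hApos, T, fun t ht => ?_⟩
  have key : ∀ ⦃x⦄, x ∈ Icc T t → (fun s => H s - Hinf) x ≤ (fun s => A * (1 + s) ^ (-α)) x := by
    refine image_le_of_deriv_right_lt_deriv_boundary'
      (f := fun s => H s - Hinf) (f' := fun s => deriv H s)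
      (B := fun s => A * (1 + s) ^ (-α)) (B' := fun s => A * (-α * (1 + s) ^ (-α - 1)))
      ?_ ?_ ?_ ?_ ?_ ?_
    · intro s hs
      exact ((hdiff s (lt_of_lt_of_le hTT₁ hs.1)).sub_const Hinf).continuousAt.continuousWithinAt
    · intro s hs
      have hd := (hdiff s (lt_of_lt_of_le hTT₁ hs.1)).hasDerivAt
      exact ((hd.sub_const Hinf)).hasDerivWithinAt
    · exact hAinit
    · apply ContinuousOn.mul continuousOn_const
      apply ContinuousOn.rpow_const
      · exact (continuous_const.add continuous_id).continuousOn
      · intro s hs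
        left
        have : (0 : ℝ) < 1 + s := by
          have := hs.1; linarith
        exact ne_of_gt this
    · intro s hs
      have hs0 : (0 : ℝ) < 1 + s := by linarith [hs.1]
      have hd : HasDerivAt (fun y : ℝ => (1 + y) ^ (-α)) (1 * (-α) * (1 + s) ^ (-α - 1)) s := by
        exact ((hasDerivAt_id s).const_add 1).rpow_const (Or.inl (ne_of_gt hs0))
      have := (hd.const_mul A).hasDerivWithinAt (s := Set.Ici s)
      simpa [mul_assoc, one_mul] using this
    · intro s hs heq
      have hsT₁ : T₁ < s := lt_of_lt_of_le hTT₁ hs.1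
      have hs0 : (0 : ℝ) < 1 + s := by linarith [hs.1]
      have hpow0 : (0 : ℝ) < (1 + s) ^ (-(α + 1)) := Real.rpow_pos_of_pos hs0 _
      have hHs := hineq s hsT₁
      have heq' : H s - Hinf = A * (1 + s) ^ (-α) := heq
      have hup : (H s - Hinf) ^ p = A ^ p * (1 + s) ^ (-(α + 1)) := by
        rw [heq']
        rw [Real.mul_rpow hApos.le (Real.rpow_pos_of_pos hs0 (-α)).le,
          ← Real.rpow_mul hs0.le, show -α * p = -(α + 1) by rw [neg_mul, hαp]]
      have hexp := hTexp s hs.1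
      have hfinal : deriv H s ≤ (1 + s) ^ (-(α + 1)) - C₁ * A ^ p * (1 + s) ^ (-(α + 1)) := by
        have := hineq s hsT₁
        rw [hup] at this  -- hineq uses p = 2*(1-θ)
        nlinarith [hexp]
      have : deriv H s ≤ (-(α * A) - 1) * (1 + s) ^ (-(α + 1)) := by
        nlinarith [mul_le_mul_of_nonneg_right hCAp hpow0.le]
      calc deriv H s ≤ (-(α * A) - 1) * (1 + s) ^ (-(α + 1)) := this
        _ < -(α * A) * (1 + s) ^ (-(α + 1)) := by nlinarith
        _ = A * (-α * (1 + s) ^ (-α - 1)) := by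
            rw [show -(α + 1) = -α - 1 by ring]; ring
  exact key (right_mem_Icc.mpr ht)
end

section
/- Suppose ū : (0,1] → ℝ is C², bounded, nonnegative with ū(0⁺) = 0, and satisfies (r ū')'(r) ≤ Cλ r^{(α-1)/3} + P r for all r ∈ (0,1), where C, λ > 0, P ≥ 0, α > -2, and lim_{r→0⁺} r ū'(r) = 0. Then ū(r) ≤ (9Cλ/(α+2)²) r^{(α+2)/3} + (P/4) r² for all r ∈ (0,1). -/
open Set Filter

/-- Auxiliary: a function on `(0,1)` with nonnegative derivative tending to `0` at `0⁺`
is nonnegative on `(0,1)`. -/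
lemma stmt19_aux (h : ℝ → ℝ)
    (hd : ∀ x ∈ Ioo (0 : ℝ) 1, DifferentiableAt ℝ h x)
    (hd0 : ∀ x ∈ Ioo (0 : ℝ) 1, 0 ≤ deriv h x)
    (hlim : Tendsto h (nhdsWithin 0 (Ioi 0)) (nhds 0)) :
    ∀ r ∈ Ioo (0 : ℝ) 1, 0 ≤ h r := by
  intro r hr
  have hmono : MonotoneOn h (Ioo (0 : ℝ) 1) := by
    apply monotoneOn_of_deriv_nonneg (convex_Ioo 0 1)
    · exact fun x hx => (hd x hx).continuousAt.continuousWithinAt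
    · rw [interior_Ioo]; exact fun x hx => (hd x hx).differentiableWithinAt
    · rw [interior_Ioo]; exact hd0
  have hev : ∀ᶠ x in nhdsWithin 0 (Ioi 0), h x ≤ h r := by
    filter_upwards [Ioo_mem_nhdsGT_of_mem (⟨le_refl (0 : ℝ), hr.1⟩ : (0:ℝ) ∈ Ico (0:ℝ) r)]
    intro x hx
    exact hmono ⟨hx.1, hx.2.trans hr.2⟩ hr hx.2.le
  exact le_of_tendsto hlim hev

/-- If `ū ≥ 0` is bounded on `(0,1]`, `ū(0⁺)=0`, `lim_{r→0⁺} r ū'(r) = 0`, and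
`(r ū')' ≤ Cλ r^{(α-1)/3} + P r` on `(0,1)`, then
`ū(r) ≤ (9Cλ/(α+2)²) r^{(α+2)/3} + (P/4) r²` on `(0,1)`. -/
theorem stmt19 (C lam P α : ℝ) (hC : 0 < C) (hlam : 0 < lam) (hP : 0 ≤ P)
    (hα : -2 < α) (ubar : ℝ → ℝ)
    (hsm : ∀ r ∈ Ioo (0 : ℝ) 1, DifferentiableAt ℝ ubar r ∧
      DifferentiableAt ℝ (fun s => s * deriv ubar s) r)
    (hbd : ∃ M : ℝ, ∀ r ∈ Ioc (0 : ℝ) 1, ubar r ≤ M)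
    (hnn : ∀ r ∈ Ioc (0 : ℝ) 1, 0 ≤ ubar r)
    (h0 : Tendsto ubar (nhdsWithin 0 (Ioi 0)) (nhds 0))
    (hlim : Tendsto (fun r => r * deriv ubar r) (nhdsWithin 0 (Ioi 0)) (nhds 0))
    (hineq : ∀ r ∈ Ioo (0 : ℝ) 1,
      deriv (fun s => s * deriv ubar s) r ≤ C * lam * r ^ ((α - 1) / 3) + P * r) :
    ∀ r ∈ Ioo (0 : ℝ) 1,
      ubar r ≤ 9 * C * lam / (α + 2) ^ 2 * r ^ ((α + 2) / 3) + P / 4 * r ^ 2 := by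
  have hα2 : (0 : ℝ) < α + 2 := by linarith
  set p : ℝ := (α + 2) / 3 with hpdef
  have hp0 : 0 < p := by positivity
  have hp1 : p - 1 = (α - 1) / 3 := by rw [hpdef]; ring
  -- limit of r^p at 0+
  have hrp : Tendsto (fun r : ℝ => r ^ p) (nhdsWithin 0 (Ioi 0)) (nhds 0) := by
    have h := (Real.continuousAt_rpow_const 0 p (Or.inr hp0.le)).tendsto
    rw [Real.zero_rpow hp0.ne'] at h
    exact h.mono_left nhdsWithin_le_nhds
  -- Step 1: r * ubar' r ≤ 3Cλ/(α+2) r^p + P/2 r^2 on (0,1)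
  set A : ℝ := 3 * C * lam / (α + 2) with hAdef
  have hstep1 : ∀ x ∈ Ioo (0 : ℝ) 1,
      x * deriv ubar x ≤ A * x ^ p + P / 2 * x ^ 2 := by
    have := stmt19_aux (fun r => A * r ^ p + P / 2 * r ^ 2 - r * deriv ubar r)
      (fun x hx => by
        have hA : DifferentiableAt ℝ (fun r : ℝ => r ^ p) x :=
          (Real.hasDerivAt_rpow_const (p := p) (Or.inl hx.1.ne')).differentiableAt
        exact (((hA.const_mul A).add ((differentiableAt_pow 2).const_mul (P/2))).sub (hsm x hx).2))
      (fun x hx => by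
        have hA : HasDerivAt (fun r : ℝ => r ^ p) (p * x ^ (p - 1)) x :=
          Real.hasDerivAt_rpow_const (Or.inl hx.1.ne')
        have hB : HasDerivAt (fun s => s * deriv ubar s)
            (deriv (fun s => s * deriv ubar s) x) x := (hsm x hx).2.hasDerivAt
        have hH : HasDerivAt
            (fun r => A * r ^ p + P / 2 * r ^ 2 - r * deriv ubar r)
            (A * (p * x ^ (p - 1)) + P / 2 * (2 * x ^ 1)
              - deriv (fun s => s * deriv ubar s) x) x := by
          exact ((hA.const_mul A).add ((hasDerivAt_pow 2 x).const_mul (P/2))).sub hB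
        rw [hH.deriv]
        have key : A * (p * x ^ (p - 1)) = C * lam * x ^ ((α - 1) / 3) := by
          rw [hp1, hAdef, hpdef]
          field_simp
        have := hineq x hx
        rw [key]
        simp only [pow_one]
        linarith)
      (by
        have h1 : Tendsto (fun r : ℝ => A * r ^ p + P / 2 * r ^ 2 - r * deriv ubar r)
            (nhdsWithin 0 (Ioi 0)) (nhds (A * 0 + P / 2 * 0 ^ 2 - 0)) := by
          exact ((hrp.const_mul A).add
            (((continuous_pow 2).tendsto 0).mono_left nhdsWithin_le_nhds |>.const_mul (P/2))).sub hlim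
        simpa using h1)
    intro x hx
    have := this x hx
    linarith
  -- Step 2: integrate again
  have hstep2 := stmt19_aux
    (fun r => 9 * C * lam / (α + 2) ^ 2 * r ^ p + P / 4 * r ^ 2 - ubar r)
    (fun x hx => by
      have hA : DifferentiableAt ℝ (fun r : ℝ => r ^ p) x :=
        (Real.hasDerivAt_rpow_const (p := p) (Or.inl hx.1.ne')).differentiableAt
      exact ((hA.const_mul _).add ((differentiableAt_pow 2).const_mul (P/4))).sub (hsm x hx).1)
    (fun x hx => by
      have hA : HasDerivAt (fun r : ℝ => r ^ p) (p * x ^ (p - 1)) x :=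
        Real.hasDerivAt_rpow_const (Or.inl hx.1.ne')
      have hB : HasDerivAt ubar (deriv ubar x) x := (hsm x hx).1.hasDerivAt
      have hH : HasDerivAt
          (fun r => 9 * C * lam / (α + 2) ^ 2 * r ^ p + P / 4 * r ^ 2 - ubar r)
          (9 * C * lam / (α + 2) ^ 2 * (p * x ^ (p - 1)) + P / 4 * (2 * x ^ 1)
            - deriv ubar x) x :=
        ((hA.const_mul _).add ((hasDerivAt_pow 2 x).const_mul (P/4))).sub hB
      rw [hH.deriv]
      have key : 9 * C * lam / (α + 2) ^ 2 * (p * x ^ (p - 1)) = A * x ^ (p - 1) := by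
        rw [hAdef, hpdef]
        field_simp
        ring
      -- from step 1: deriv ubar x ≤ A * x^(p-1) + P/2 * x
      have hx0 : (0 : ℝ) < x := hx.1
      have hs1 := hstep1 x hx
      have hxp : x ^ p = x ^ (p - 1) * x := by
        rw [← Real.rpow_add_one hx0.ne' (p - 1)]; ring_nf
      have hdu : deriv ubar x ≤ A * x ^ (p - 1) + P / 2 * x := by
        rw [hxp] at hs1
        have h2 : x * deriv ubar x ≤ x * (A * x ^ (p - 1) + P / 2 * x) := by
          nlinarith [hs1]
        exact le_of_mul_le_mul_left h2 hx0
      rw [key]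
      simp only [pow_one]
      linarith)
    (by
      have h1 : Tendsto (fun r : ℝ => 9 * C * lam / (α + 2) ^ 2 * r ^ p + P / 4 * r ^ 2 - ubar r)
          (nhdsWithin 0 (Ioi 0)) (nhds (9 * C * lam / (α + 2) ^ 2 * 0 + P / 4 * 0 ^ 2 - 0)) :=
        ((hrp.const_mul _).add
          (((continuous_pow 2).tendsto 0).mono_left nhdsWithin_le_nhds |>.const_mul (P/4))).sub h0
      simpa using h1)
  intro r hr
  have := hstep2 r hr
  rw [hpdef] at this
  linarith
end
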